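/- arXiv:2109.06911 — 4 statements merged into one kernel-verified Lean document; each statement's English description precedes it below -/
import Mathlib

section
/- Consider the superexponential regime in which a_T/T → ∞. The robust predictor ĉ_R(x,P,T) := max_{i∈Σ} ℓ(x,i) is a regular predictor satisfying the out-of-sample guarantee, and for every regular predictor ĉ ∈ 𝒞 satisfying the out-of-sample guarantee one has ĉ_R ⪯_𝒞 ĉ; that is, ĉ_R is a strongly optimal predictor in the superexponential regime. -/
open Filter Asymptotics

namespace DDO

/-- The probability simplex `𝒫` over the scenario set `Σ = Fin d`. -/
def simplex (d : ℕ) : Set (Fin d → ℝ) :=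
  {P | (∀ i, 0 ≤ P i) ∧ ∑ i, P i = 1}

/-- The relative interior `𝒫°` of the probability simplex. -/
def simplexInt (d : ℕ) : Set (Fin d → ℝ) :=
  {P | (∀ i, 0 < P i) ∧ ∑ i, P i = 1}

/-- Expected cost `c(x, P) = ∑ i, ℓ(x, i) · P(i)` (extended linearly to `ℝ^d`). -/
noncomputable def cost {X : Type*} {d : ℕ} (ℓ : X → Fin d → ℝ) (x : X)
    (P : Fin d → ℝ) : ℝ :=
  ∑ i, ℓ x i * P i

/-- Variance `Var_P(ℓ(x, ξ))` of the loss under `P`. -/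
noncomputable def varLoss {X : Type*} {d : ℕ} (ℓ : X → Fin d → ℝ) (x : X)
    (P : Fin d → ℝ) : ℝ :=
  (∑ i, ℓ x i ^ 2 * P i) - cost ℓ x P ^ 2

/-- Empirical distribution `P̂_T` of the `T` samples `ω`. -/
noncomputable def empDist {d T : ℕ} (ω : Fin T → Fin d) : Fin d → ℝ :=
  fun i => ((Finset.univ.filter (fun t => ω t = i)).card : ℝ) / (T : ℝ)

open Classical in
/-- `ℙ^∞(A)`: the probability, under i.i.d. sampling from `P`, of an event `A`
depending on the first `T` samples. -/
noncomputable def probT {d : ℕ} (P : Fin d → ℝ) (T : ℕ)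
    (A : (Fin T → Fin d) → Prop) : ℝ :=
  ∑ ω : Fin T → Fin d, if A ω then ∏ t, P (ω t) else 0

/-- Regular predictors (the class `𝒞`): uniformly bounded, equicontinuous,
differentiable in the distribution argument (in the Fréchet sense along the simplex),
with uniformly bounded and equicontinuous derivatives. -/
structure IsRegularPredictor {X : Type*} [MetricSpace X] (d : ℕ)
    (chat : X → (Fin d → ℝ) → ℕ → ℝ) : Prop where
  unifBounded : ∃ K : ℝ, ∀ (T : ℕ) (x : X), ∀ P ∈ simplex d, |chat x P T| ≤ K
  equicontinuous : ∀ (x : X), ∀ P ∈ simplex d, ∀ ε > (0 : ℝ), ∃ δ > (0 : ℝ),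
    ∀ (T : ℕ) (x' : X), ∀ P' ∈ simplex d,
      dist x x' < δ → dist P P' < δ → |chat x P T - chat x' P' T| < ε
  differentiableDeriv : ∃ D : X → (Fin d → ℝ) → ℕ → ((Fin d → ℝ) →L[ℝ] ℝ),
    (∀ (T : ℕ) (x : X), ∀ P ∈ simplex d,
      HasFDerivWithinAt (fun Q => chat x Q T) (D x P T) (simplex d) P) ∧
    (∃ K : ℝ, ∀ (T : ℕ) (x : X), ∀ P ∈ simplex d, ‖D x P T‖ ≤ K) ∧
    (∀ (x : X), ∀ P ∈ simplex d, ∀ ε > (0 : ℝ), ∃ δ > (0 : ℝ),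
      ∀ (T : ℕ) (x' : X), ∀ P' ∈ simplex d,
        dist x x' < δ → dist P P' < δ → ‖D x P T - D x' P' T‖ < ε)

/-- The out-of-sample guarantee at speed `(a_T)`:
`limsup_{T→∞} (1/a_T) · log ℙ^∞( c(x,P) > ĉ(x, P̂_T, T) ) ≤ -1`
for every `x ∈ 𝒳` and `P ∈ 𝒫°`, stated in the equivalent ε-eventual form
`ℙ^∞(disappointment) ≤ exp((-1+ε) a_T)` eventually (which in particular permits a
disappointment probability equal to zero). -/
def OOSGuarantee {X : Type*} {d : ℕ} (ℓ : X → Fin d → ℝ) (a : ℕ → ℝ)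
    (chat : X → (Fin d → ℝ) → ℕ → ℝ) : Prop :=
  ∀ (x : X), ∀ P ∈ simplexInt d, ∀ ε > (0 : ℝ), ∀ᶠ T : ℕ in atTop,
    probT P T (fun ω => cost ℓ x P > chat x (empDist ω) T) ≤
      Real.exp ((-1 + ε) * a T)

/-- The prediction error `|ĉ(x,P,T) - c(x,P)|`. -/
noncomputable def predErr {X : Type*} {d : ℕ} (ℓ : X → Fin d → ℝ)
    (chat : X → (Fin d → ℝ) → ℕ → ℝ) (x : X) (P : Fin d → ℝ) (T : ℕ) : ℝ :=
  |chat x P T - cost ℓ x P|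

open Classical in
/-- Ratio with the convention `0 / 0 = 1`. -/
noncomputable def ratio (u v : ℝ) : ℝ := if u = 0 ∧ v = 0 then 1 else u / v

/-- The partial order `⪯_𝒞` on predictors:
`limsup_{T→∞} |ĉ₁(x,P,T) - c(x,P)| / |ĉ₂(x,P,T) - c(x,P)| ≤ 1`
(convention `0/0 = 1`) for every `x ∈ 𝒳`, `P ∈ 𝒫°`, stated in the equivalent
ε-eventual form (the ratio is a nonnegative sequence). -/
def PredOrder {X : Type*} {d : ℕ} (ℓ : X → Fin d → ℝ)
    (chat1 chat2 : X → (Fin d → ℝ) → ℕ → ℝ) : Prop :=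
  ∀ (x : X), ∀ P ∈ simplexInt d, ∀ ε > (0 : ℝ), ∀ᶠ T : ℕ in atTop,
    ratio (predErr ℓ chat1 x P T) (predErr ℓ chat2 x P T) ≤ 1 + ε

/-- The equivalence `≡` on predictors: `|ĉ₁ - c|` and `|ĉ₂ - c|` are asymptotically
equivalent as `T → ∞` for every `x ∈ 𝒳` and `P ∈ 𝒫°`. -/
def PredEquiv {X : Type*} {d : ℕ} (ℓ : X → Fin d → ℝ)
    (chat1 chat2 : X → (Fin d → ℝ) → ℕ → ℝ) : Prop :=
  ∀ (x : X), ∀ P ∈ simplexInt d,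
    (fun T : ℕ => predErr ℓ chat1 x P T) ~[atTop]
      (fun T : ℕ => predErr ℓ chat2 x P T)

/-- A single term `q · log(q/p)` of the relative entropy, with the conventions
`0 · log(0/p) = 0` and `q · log(q/0) = ∞` for `q > 0`. -/
noncomputable def klTerm (q p : ℝ) : EReal :=
  if q = 0 then 0 else if p = 0 then ⊤ else ((q * Real.log (q / p) : ℝ) : EReal)

/-- The relative entropy (KL divergence) `I(Q, P')`. -/
noncomputable def relEnt {d : ℕ} (Q P' : Fin d → ℝ) : EReal :=
  ∑ i, klTerm (Q i) (P' i)

/-- The KL-DRO predictor with radius `r`: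
`ĉ_KL(x,P) = sup { c(x,P') : P' ∈ 𝒫, I(P,P') ≤ r }`. -/
noncomputable def cKL {X : Type*} {d : ℕ} (ℓ : X → Fin d → ℝ) (r : ℝ)
    (x : X) (P : Fin d → ℝ) : ℝ :=
  sSup {y | ∃ P' ∈ simplex d, relEnt P P' ≤ (r : EReal) ∧ y = cost ℓ x P'}

/-- The robust predictor `ĉ_R(x) = max_{i ∈ Σ} ℓ(x,i)`. -/
noncomputable def cR {X : Type*} {d : ℕ} (ℓ : X → Fin d → ℝ) (x : X) : ℝ :=
  ⨆ i : Fin d, ℓ x i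

/-- The sample variance penalization (SVP) predictor
`ĉ_V(x,P,T) = c(x,P) + √((2 a_T / T) · Var_P(ℓ(x,ξ)))`. -/
noncomputable def cV {X : Type*} {d : ℕ} (a : ℕ → ℝ) (ℓ : X → Fin d → ℝ)
    (x : X) (P : Fin d → ℝ) (T : ℕ) : ℝ :=
  cost ℓ x P + Real.sqrt ((2 * a T / (T : ℝ)) * varLoss ℓ x P)

/-- The squared local ellipsoid norm `‖Δ‖_P² = (1/2) ∑ i, Δ_i² / P(i)`. -/
noncomputable def ellNormSq {d : ℕ} (P Δ : Fin d → ℝ) : ℝ :=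
  (1 / 2) * ∑ i, Δ i ^ 2 / P i

/-- The optimal cost `c*(P) = min_{x ∈ 𝒳} c(x,P)`. -/
noncomputable def cstar {X : Type*} {d : ℕ} (ℓ : X → Fin d → ℝ)
    (P : Fin d → ℝ) : ℝ :=
  sInf (Set.range fun x : X => cost ℓ x P)

/-- The optimal predicted cost `ĉ*(P,T) = min_{x ∈ 𝒳} ĉ(x,P,T)`. -/
noncomputable def chatStar {X : Type*} {d : ℕ} (chat : X → (Fin d → ℝ) → ℕ → ℝ)
    (P : Fin d → ℝ) (T : ℕ) : ℝ :=
  sInf (Set.range fun x : X => chat x P T)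

/-- `x̂` is a prescriptor associated with the predictor `ĉ`:
`x̂_T(P) ∈ argmin_{x ∈ 𝒳} ĉ(x,P,T)` for all `P ∈ 𝒫` and `T`. -/
def IsPrescriptor {X : Type*} {d : ℕ} (chat : X → (Fin d → ℝ) → ℕ → ℝ)
    (xhat : ℕ → (Fin d → ℝ) → X) : Prop :=
  ∀ (T : ℕ), ∀ P ∈ simplex d, ∀ x : X, chat (xhat T P) P T ≤ chat x P T

/-- The prescription out-of-sample guarantee at speed `(a_T)`:
`limsup_{T→∞} (1/a_T) · log ℙ^∞( c(x̂_T(P̂_T), P) > ĉ*(P̂_T, T) ) ≤ -1`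
for every `P ∈ 𝒫°`, stated in the equivalent ε-eventual form. -/
def PrescOOSGuarantee {X : Type*} {d : ℕ} (ℓ : X → Fin d → ℝ) (a : ℕ → ℝ)
    (chat : X → (Fin d → ℝ) → ℕ → ℝ) (xhat : ℕ → (Fin d → ℝ) → X) : Prop :=
  ∀ P ∈ simplexInt d, ∀ ε > (0 : ℝ), ∀ᶠ T : ℕ in atTop,
    probT P T (fun ω =>
        cost ℓ (xhat T (empDist ω)) P > chatStar chat (empDist ω) T) ≤
      Real.exp ((-1 + ε) * a T)

/-- The partial order `⪯_X̂` on prescriptors: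
`limsup_{T→∞} |ĉ₁*(P,T) - c*(P)| / |ĉ₂*(P,T) - c*(P)| ≤ 1` (convention `0/0 = 1`)
for every `P ∈ 𝒫°`, stated in the equivalent ε-eventual form. -/
def PrescOrder {X : Type*} {d : ℕ} (ℓ : X → Fin d → ℝ)
    (chat1 chat2 : X → (Fin d → ℝ) → ℕ → ℝ) : Prop :=
  ∀ P ∈ simplexInt d, ∀ ε > (0 : ℝ), ∀ᶠ T : ℕ in atTop,
    ratio |chatStar chat1 P T - cstar ℓ P| |chatStar chat2 P T - cstar ℓ P| ≤ 1 + ε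

/-- The equivalence `≡_X̂` on prescriptors: `|ĉ₁* - c*|` and `|ĉ₂* - c*|` are
asymptotically equivalent as `T → ∞` for every `P ∈ 𝒫°`. -/
def PrescEquiv {X : Type*} {d : ℕ} (ℓ : X → Fin d → ℝ)
    (chat1 chat2 : X → (Fin d → ℝ) → ℕ → ℝ) : Prop :=
  ∀ P ∈ simplexInt d,
    (fun T : ℕ => |chatStar chat1 P T - cstar ℓ P|) ~[atTop]
      (fun T : ℕ => |chatStar chat2 P T - cstar ℓ P|)

section StrongOptAux

lemma cR_max {X : Type*} {d : ℕ} (ℓ : X → Fin d → ℝ) (x : X) (hd : 0 < d) :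
    ∃ i, (∀ j, ℓ x j ≤ ℓ x i) ∧ cR ℓ x = ℓ x i := by
  have : Nonempty (Fin d) := ⟨⟨0, hd⟩⟩
  obtain ⟨i, hi⟩ := Finite.exists_max (ℓ x)
  exact ⟨i, hi, le_antisymm (ciSup_le hi)
    (le_ciSup (Set.Finite.bddAbove (Set.finite_range _)) i)⟩

lemma simplex_d_pos {d : ℕ} {P : Fin d → ℝ} (hP : P ∈ simplex d) : 0 < d := by
  by_contra h
  have hd : d = 0 := by omega
  subst hd
  have := hP.2
  simp at this

lemma cost_le_cR {X : Type*} {d : ℕ} (ℓ : X → Fin d → ℝ) (x : X) {P : Fin d → ℝ}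
    (hP : P ∈ simplex d) : cost ℓ x P ≤ cR ℓ x := by
  obtain ⟨i, hi, hEq⟩ := cR_max ℓ x (simplex_d_pos hP)
  calc cost ℓ x P = ∑ j, ℓ x j * P j := rfl
    _ ≤ ∑ j, ℓ x i * P j :=
        Finset.sum_le_sum fun j _ => mul_le_mul_of_nonneg_right (hi j) (hP.1 j)
    _ = ℓ x i := by rw [← Finset.mul_sum, hP.2, mul_one]
    _ = cR ℓ x := hEq.symm

def sigmaFiber {d : ℕ} (k : Fin d → ℕ) (i : Fin d) :
    {s : Σ j, Fin (k j) // s.1 = i} ≃ Fin (k i) where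
  toFun s := Fin.cast (congrArg k s.2) s.1.2
  invFun v := ⟨⟨i, v⟩, rfl⟩
  left_inv := by rintro ⟨⟨j, v⟩, rfl⟩; rfl
  right_inv v := rfl

lemma exists_count_fun {d T : ℕ} (k : Fin d → ℕ) (h : ∑ i, k i = T) :
    ∃ ω : Fin T → Fin d, ∀ i,
      (Finset.univ.filter (fun t => ω t = i)).card = k i := by
  classical
  have hcard : Fintype.card (Σ i : Fin d, Fin (k i)) = Fintype.card (Fin T) := by
    simp [Fintype.card_sigma, h]
  obtain ⟨e⟩ := Fintype.card_eq.mp hcard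
  refine ⟨fun t => (e.symm t).1, fun i => ?_⟩
  rw [← Fintype.card_subtype]
  have eq1 : {t : Fin T // (e.symm t).1 = i} ≃ Fin (k i) :=
    (e.symm.subtypeEquiv (fun t => Iff.rfl)).trans (sigmaFiber k i)
  rw [Fintype.card_congr eq1, Fintype.card_fin]

lemma exists_empDist_close {d T : ℕ} (hT : 0 < T) {P : Fin d → ℝ}
    (hP : P ∈ simplex d) (hd : 0 < d) :
    ∃ ω : Fin T → Fin d, empDist ω ∈ simplex d ∧
      ∀ i, |empDist ω i - P i| ≤ (d : ℝ) / (T : ℝ) := by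
  classical
  set i₀ : Fin d := ⟨0, hd⟩ with hi₀
  set S : ℕ := ∑ j ∈ Finset.univ.erase i₀, ⌊(T : ℝ) * P j⌋₊ with hS
  have hTpos : (0:ℝ) < T := by exact_mod_cast hT
  have hfl : ∀ j, (⌊(T : ℝ) * P j⌋₊ : ℝ) ≤ (T : ℝ) * P j :=
    fun j => Nat.floor_le (mul_nonneg hTpos.le (hP.1 j))
  have hfl2 : ∀ j, (T : ℝ) * P j ≤ (⌊(T : ℝ) * P j⌋₊ : ℝ) + 1 :=
    fun j => (Nat.lt_floor_add_one _).le
  have hSle : (S : ℝ) ≤ (T : ℝ) := by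
    rw [hS]
    push_cast
    calc ∑ j ∈ Finset.univ.erase i₀, (⌊(T : ℝ) * P j⌋₊ : ℝ)
        ≤ ∑ j ∈ Finset.univ.erase i₀, (T : ℝ) * P j :=
          Finset.sum_le_sum fun j _ => hfl j
      _ ≤ ∑ j, (T : ℝ) * P j :=
          Finset.sum_le_sum_of_subset_of_nonneg (Finset.erase_subset _ _)
            (fun j _ _ => mul_nonneg hTpos.le (hP.1 j))
      _ = T := by rw [← Finset.mul_sum, hP.2, mul_one]
  have hSleN : S ≤ T := by exact_mod_cast hSle
  set k : Fin d → ℕ := fun j => if j = i₀ then T - S else ⌊(T : ℝ) * P j⌋₊ with hk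
  have hsum : ∑ j, k j = T := by
    rw [← Finset.add_sum_erase _ _ (Finset.mem_univ i₀)]
    have : ∑ j ∈ Finset.univ.erase i₀, k j = S := by
      rw [hS]
      exact Finset.sum_congr rfl fun j hj => by
        simp [hk, Finset.ne_of_mem_erase hj]
    rw [this]
    simp [hk]
    omega
  obtain ⟨ω, hω⟩ := exists_count_fun k hsum
  have hemp : ∀ i, empDist ω i = (k i : ℝ) / T := fun i => by
    rw [empDist, hω i]
  have hmem : empDist ω ∈ simplex d := by
    constructor
    · intro i; rw [hemp i]; positivity
    · rw [Finset.sum_congr rfl fun i _ => hemp i, ← Finset.sum_div]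
      rw [show ∑ i, (k i : ℝ) = ((∑ i, k i : ℕ) : ℝ) by push_cast; ring, hsum]
      field_simp
  refine ⟨ω, hmem, fun i => ?_⟩
  have hone : (1:ℝ) ≤ d := by exact_mod_cast hd
  by_cases hii : i = i₀
  · subst hii
    have hki : (k i₀ : ℝ) = (T : ℝ) - S := by
      simp [hk]; push_cast [Nat.cast_sub hSleN]; ring
    set A : ℝ := ∑ j ∈ Finset.univ.erase i₀, P j with hA
    have hPi : P i₀ = 1 - A := by
      have := Finset.add_sum_erase _ P (Finset.mem_univ i₀)
      rw [hP.2] at this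
      rw [hA]; linarith
    have hTA : ∑ j ∈ Finset.univ.erase i₀, (T:ℝ) * P j = (T:ℝ) * A := by
      rw [hA, Finset.mul_sum]
    have hSup : (S:ℝ) ≤ (T:ℝ) * A := by
      rw [← hTA, hS]; push_cast
      exact Finset.sum_le_sum fun j _ => hfl j
    have hSlo : (T:ℝ) * A ≤ (S:ℝ) + ((d:ℝ) - 1) := by
      have hcard : ((Finset.univ.erase i₀).card : ℝ) ≤ (d:ℝ) - 1 := by
        rw [Finset.card_erase_of_mem (Finset.mem_univ i₀)]
        simp only [Finset.card_univ, Fintype.card_fin]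
        rw [Nat.cast_sub hd]
        simp
      calc (T:ℝ) * A = ∑ j ∈ Finset.univ.erase i₀, (T:ℝ) * P j := hTA.symm
        _ ≤ ∑ j ∈ Finset.univ.erase i₀, ((⌊(T : ℝ) * P j⌋₊ : ℝ) + 1) :=
            Finset.sum_le_sum fun j _ => hfl2 j
        _ = (S:ℝ) + (Finset.univ.erase i₀).card := by
            rw [Finset.sum_add_distrib, hS]; push_cast; rw [Finset.sum_const, nsmul_eq_mul, mul_one]
        _ ≤ _ := by linarith
    rw [hemp, hki, hPi]
    have key : ((T:ℝ) - S)/T - (1 - A) = (((T:ℝ) - S) - T*(1-A))/T := by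
      field_simp
    rw [key, abs_div, abs_of_pos hTpos, div_le_div_iff_of_pos_right hTpos, abs_le]
    constructor <;> nlinarith
  · have hki : (k i : ℝ) = (⌊(T : ℝ) * P i⌋₊ : ℝ) := by simp [hk, hii]
    rw [hemp, hki]
    have key : (⌊(T : ℝ) * P i⌋₊ : ℝ)/T - P i = ((⌊(T : ℝ) * P i⌋₊ : ℝ) - T * P i)/T := by
      field_simp
    rw [key, abs_div, abs_of_pos hTpos, div_le_div_iff_of_pos_right hTpos, abs_le]
    constructor <;> nlinarith [hfl i, hfl2 i]

lemma prod_le_probT {d T : ℕ} {P : Fin d → ℝ} (hP : ∀ i, 0 ≤ P i)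
    {A : (Fin T → Fin d) → Prop} {ω₀ : Fin T → Fin d} (hA : A ω₀) :
    (∏ t, P (ω₀ t)) ≤ probT P T A := by
  classical
  rw [probT]
  have h0 : (∏ t, P (ω₀ t)) = if A ω₀ then ∏ t, P (ω₀ t) else 0 := (if_pos hA).symm
  rw [h0]
  refine Finset.single_le_sum
    (f := fun ω : Fin T → Fin d => if A ω then ∏ t, P (ω t) else 0)
    (fun ω _ => ?_) (Finset.mem_univ ω₀)
  show 0 ≤ (if A ω then ∏ t, P (ω t) else 0)
  split_ifs
  · exact Finset.prod_nonneg fun t _ => hP _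
  · exact le_rfl

lemma chat_eventually_ge {X : Type*} [MetricSpace X] {d : ℕ}
    (ℓ : X → Fin d → ℝ) (a : ℕ → ℝ)
    (ha_sup : Tendsto (fun T : ℕ => a T / (T : ℝ)) atTop atTop)
    (chat : X → (Fin d → ℝ) → ℕ → ℝ)
    (hreg : IsRegularPredictor d chat) (hoos : OOSGuarantee ℓ a chat)
    (x : X) {P : Fin d → ℝ} (hP : P ∈ simplexInt d) {η : ℝ} (hη : 0 < η) :
    ∀ᶠ T : ℕ in atTop, cR ℓ x - η ≤ chat x P T := by
  classical
  have hPs : P ∈ simplex d := ⟨fun i => (hP.1 i).le, hP.2⟩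
  have hd : 0 < d := simplex_d_pos hPs
  have hne : Nonempty (Fin d) := ⟨⟨0, hd⟩⟩
  obtain ⟨i₁, hi₁, hcRmax⟩ := cR_max ℓ x hd
  set c0 := cost ℓ x P with hc0
  set B := cR ℓ x - c0 with hB
  have hB0 : 0 ≤ B := sub_nonneg.2 (cost_le_cR ℓ x hPs)
  set s : ℝ := min 1 (η / (3 * (B + 1))) with hs
  have hs0 : 0 < s := lt_min one_pos (by positivity)
  have hs1 : s ≤ 1 := min_le_left _ _
  have hsB : s * B ≤ η / 3 := by
    calc s * B ≤ (η / (3 * (B + 1))) * B :=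
          mul_le_mul_of_nonneg_right (min_le_right _ _) hB0
      _ ≤ η / 3 := by
          rw [div_mul_eq_mul_div, div_le_div_iff₀ (by positivity) (by norm_num)]
          nlinarith
  set P' : Fin d → ℝ := fun j => (1 - s) * (if j = i₁ then 1 else 0) + s * P j with hP'
  have hP'mem : P' ∈ simplexInt d := by
    constructor
    · intro j
      have h2 : 0 < s * P j := mul_pos hs0 (hP.1 j)
      have h1 : 0 ≤ (1 - s) * (if j = i₁ then 1 else 0) := by
        split_ifs <;> nlinarith
      simp only [hP']; linarith
    · simp only [hP']
      rw [Finset.sum_add_distrib, ← Finset.mul_sum, ← Finset.mul_sum,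
        Finset.sum_ite_eq' Finset.univ i₁ (fun _ => (1:ℝ)), hP.2]
      simp
  have hP's : P' ∈ simplex d := ⟨fun i => (hP'mem.1 i).le, hP'mem.2⟩
  have hcost' : cost ℓ x P' = cR ℓ x - s * B := by
    have h1 : cost ℓ x P' = (1 - s) * ℓ x i₁ + s * c0 := by
      simp only [cost, hP', hc0]
      rw [Finset.sum_congr rfl (fun j _ =>
        show ℓ x j * ((1 - s) * (if j = i₁ then 1 else 0) + s * P j)
            = (1 - s) * (if j = i₁ then ℓ x j else 0) + s * (ℓ x j * P j) by
          split_ifs <;> ring)]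
      rw [Finset.sum_add_distrib, ← Finset.mul_sum, ← Finset.mul_sum,
        Finset.sum_ite_eq' Finset.univ i₁ (ℓ x)]
      simp
    rw [h1]; simp only [hB, hc0, hcRmax]; ring
  have hcost'' : cR ℓ x - η / 3 ≤ cost ℓ x P' := by rw [hcost']; linarith
  set p' : ℝ := Finset.univ.inf' Finset.univ_nonempty P' with hp'
  have hp'pos : 0 < p' := by
    rw [hp', Finset.lt_inf'_iff]
    exact fun j _ => hP'mem.1 j
  have hp'le : ∀ j, p' ≤ P' j := fun j => Finset.inf'_le _ (Finset.mem_univ j)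
  obtain ⟨δ, hδ0, hδ⟩ := hreg.equicontinuous x P hPs (η / 3) (by positivity)
  have E1 := hoos x P' hP'mem (1/2) (by norm_num)
  have E2 : ∀ᶠ T : ℕ in atTop, 2 * Real.log (1 / p') + 1 ≤ a T / T :=
    ha_sup.eventually_ge_atTop _
  have E3 : ∀ᶠ T : ℕ in atTop, (d : ℝ) / T < δ := by
    have h := tendsto_const_div_atTop_nhds_zero_nat (d : ℝ)
    exact h.eventually_lt_const hδ0
  filter_upwards [E1, E2, E3, eventually_ge_atTop 1] with T h1 h2 h3 h4
  have hT0 : 0 < T := h4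
  have hTpos : (0:ℝ) < T := by exact_mod_cast hT0
  have claimA : ∀ ω : Fin T → Fin d, cost ℓ x P' ≤ chat x (empDist ω) T := by
    by_contra hcon
    push_neg at hcon
    obtain ⟨ω₀, hω₀⟩ := hcon
    have hterm : p' ^ T ≤ probT P' T (fun ω => cost ℓ x P' > chat x (empDist ω) T) := by
      calc p' ^ T = ∏ _t : Fin T, p' := by
            rw [Finset.prod_const, Finset.card_univ, Fintype.card_fin]
        _ ≤ ∏ t, P' (ω₀ t) :=
            Finset.prod_le_prod (fun _ _ => hp'pos.le) (fun t _ => hp'le _)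
        _ ≤ _ := prod_le_probT (fun i => (hP'mem.1 i).le) hω₀
    have hlt : Real.exp ((-1 + 1/2) * a T) < p' ^ T := by
      rw [← Real.exp_log (pow_pos hp'pos T), Real.log_pow, Real.exp_lt_exp]
      have haT : (2 * Real.log (1 / p') + 1) * T ≤ a T := by
        exact (le_div_iff₀ hTpos).mp h2
      have hlog : Real.log (1 / p') = - Real.log p' := by rw [one_div, Real.log_inv]
      have hT1 : (1:ℝ) ≤ T := by exact_mod_cast h4
      nlinarith
    have := hterm.trans h1
    linarith
  obtain ⟨ω₁, hω₁mem, hω₁close⟩ := exists_empDist_close hT0 hPs hd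
  have hdist : dist P (empDist ω₁) < δ := by
    refine lt_of_le_of_lt ?_ h3
    rw [dist_pi_le_iff (by positivity)]
    intro i
    rw [Real.dist_eq, abs_sub_comm]
    exact hω₁close i
  have hcl := hδ T x (empDist ω₁) hω₁mem (by simpa using hδ0) hdist
  have h5 := claimA ω₁
  have h6 := abs_lt.1 hcl
  linarith [h6.1, h6.2]

end StrongOptAux

/-- In the superexponential regime (`a_T/T → ∞`), the robust predictor
`ĉ_R(x) = max_{i∈Σ} ℓ(x,i)` is a regular predictor satisfying the out-of-sample
guarantee and is preferred (`⪯_𝒞`) to every regular predictor satisfying it: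
it is a strongly optimal predictor. -/
theorem stmt_2 {X : Type*} [MetricSpace X] [CompactSpace X] {d : ℕ}
    (ℓ : X → Fin d → ℝ) (hℓ : ∀ i, Continuous fun x => ℓ x i)
    (a : ℕ → ℝ) (ha_pos : ∀ T, 0 < a T)
    (ha_top : Tendsto a atTop atTop)
    (ha_sup : Tendsto (fun T : ℕ => a T / (T : ℝ)) atTop atTop) :
    IsRegularPredictor d (fun x (_ : Fin d → ℝ) (_ : ℕ) => cR ℓ x) ∧
      OOSGuarantee ℓ a (fun x (_ : Fin d → ℝ) (_ : ℕ) => cR ℓ x) ∧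
      ∀ chat : X → (Fin d → ℝ) → ℕ → ℝ,
        IsRegularPredictor d chat → OOSGuarantee ℓ a chat →
          PredOrder ℓ (fun x (_ : Fin d → ℝ) (_ : ℕ) => cR ℓ x) chat := by
  refine ⟨⟨?_, ?_, ?_⟩, ?_, ?_⟩
  · -- uniformly bounded
    have hbd : ∀ i : Fin d, ∃ C : ℝ, ∀ y : X, |ℓ y i| ≤ C := by
      intro i
      obtain ⟨C, hC⟩ := (isCompact_range ((hℓ i).abs)).bddAbove
      exact ⟨C, fun y => hC ⟨y, rfl⟩⟩
    choose C hC using hbd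
    refine ⟨∑ i, max (C i) 0, fun T x P hP => ?_⟩
    obtain ⟨i, hi, hEq⟩ := cR_max ℓ x (simplex_d_pos hP)
    calc |cR ℓ x| = |ℓ x i| := by rw [hEq]
      _ ≤ C i := hC i x
      _ ≤ max (C i) 0 := le_max_left _ _
      _ ≤ ∑ j, max (C j) 0 :=
          Finset.single_le_sum (f := fun j => max (C j) 0)
            (fun j _ => le_max_right _ _) (Finset.mem_univ i)
  · -- equicontinuous
    intro x P hP ε hε
    have hd := simplex_d_pos hP
    have hne : Nonempty (Fin d) := ⟨⟨0, hd⟩⟩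
    have hδi : ∀ i : Fin d, ∃ δ > (0:ℝ), ∀ y : X, dist y x < δ → |ℓ y i - ℓ x i| < ε := by
      intro i
      have hca : ContinuousAt (fun y => ℓ y i) x := (hℓ i).continuousAt
      rw [Metric.continuousAt_iff] at hca
      obtain ⟨δ, hδ0, hδ⟩ := hca ε hε
      exact ⟨δ, hδ0, fun y hy => by have := hδ hy; rwa [Real.dist_eq] at this⟩
    choose δf hδf0 hδf using hδi
    refine ⟨Finset.univ.inf' Finset.univ_nonempty δf, ?_, ?_⟩
    · rw [gt_iff_lt, Finset.lt_inf'_iff]; exact fun i _ => hδf0 i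
    · intro T x' P' hP' hxx' hPP'
      obtain ⟨i, hi, hEq⟩ := cR_max ℓ x hd
      obtain ⟨j, hj, hEq'⟩ := cR_max ℓ x' hd
      have hdx : ∀ k : Fin d, dist x' x < δf k := fun k =>
        lt_of_lt_of_le (by rwa [dist_comm] at hxx') (Finset.inf'_le _ (Finset.mem_univ k))
      have h1 := abs_lt.1 (hδf i x' (hdx i))
      have h2 := abs_lt.1 (hδf j x' (hdx j))
      have h3 := hj i
      have h4 := hi j
      rw [abs_sub_lt_iff]
      constructor
      · rw [hEq, hEq']; linarith
      · rw [hEq, hEq']; linarith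
  · -- derivatives
    refine ⟨fun _ _ _ => 0, fun T x P hP => hasFDerivWithinAt_const _ _ _,
      ⟨0, fun T x P hP => by simp⟩,
      fun x P hP ε hε => ⟨1, one_pos, fun T x' P' hP' _ _ => by simpa using hε⟩⟩
  · -- OOS guarantee
    intro x P hP ε hε
    refine Eventually.of_forall fun T => ?_
    have hz : probT P T (fun _ : Fin T → Fin d => cost ℓ x P > cR ℓ x) = 0 := by
      rw [probT]
      exact Finset.sum_eq_zero fun ω _ =>
        if_neg (not_lt.2 (cost_le_cR ℓ x ⟨fun i => (hP.1 i).le, hP.2⟩))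
    exact (le_of_eq hz).trans (Real.exp_pos _).le
  · -- strong optimality
    intro chat hregc hoosc x P hP ε hε
    have hPs : P ∈ simplex d := ⟨fun i => (hP.1 i).le, hP.2⟩
    set c0 := cost ℓ x P with hc0
    set e := cR ℓ x - c0 with he
    have he0 : 0 ≤ e := sub_nonneg.2 (cost_le_cR ℓ x hPs)
    rcases eq_or_lt_of_le he0 with h0 | h0
    · refine Eventually.of_forall fun T => ?_
      have hu : predErr ℓ (fun x _ _ => cR ℓ x) x P T = 0 := by
        simp only [predErr]
        rw [← hc0, ← he, ← h0, abs_zero]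
      simp only [ratio]
      split_ifs with h
      · linarith
      · have hv : predErr ℓ chat x P T ≠ 0 := fun hv0 => h ⟨hu, hv0⟩
        rw [hu, zero_div]; linarith
    · have hη : (0:ℝ) < e * ε / (1 + ε) := by positivity
      filter_upwards [chat_eventually_ge ℓ a ha_sup chat hregc hoosc x hP hη] with T hT
      have hee : e - e * ε / (1 + ε) = e / (1 + ε) := by
        field_simp; ring
      have hv : e / (1 + ε) ≤ predErr ℓ chat x P T := by
        have h1 : e / (1 + ε) ≤ chat x P T - c0 := by
          rw [← hee]
          have : cR ℓ x = c0 + e := by rw [he]; ring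
          linarith
        calc e / (1 + ε) ≤ chat x P T - c0 := h1
          _ ≤ |chat x P T - c0| := le_abs_self _
          _ = predErr ℓ chat x P T := by rw [predErr, hc0]
      have hvpos : 0 < predErr ℓ chat x P T := lt_of_lt_of_le (by positivity) hv
      have hu : predErr ℓ (fun x _ _ => cR ℓ x) x P T = e := by
        simp only [predErr]
        rw [← hc0, ← he, abs_of_nonneg he0]
      simp only [ratio]
      rw [if_neg, hu, div_le_iff₀ hvpos]
      · calc e = (1 + ε) * (e / (1 + ε)) := by field_simp
          _ ≤ (1 + ε) * predErr ℓ chat x P T :=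
              mul_le_mul_of_nonneg_left hv (by linarith)
      · rintro ⟨hh1, hh2⟩
        rw [hu] at hh1
        linarith

end DDO
end

section
/- Consider the subexponential regime in which a_T → ∞ and a_T/T → 0. Every weakly optimal regular predictor is consistent: for every regular predictor ĉ ∈ 𝒞 satisfying the out-of-sample guarantee, either ĉ(x,P,T) → c(x,P) as T → ∞ for every x ∈ 𝒳 and P ∈ 𝒫, or there exists a regular predictor ĉ' ∈ 𝒞 satisfying the out-of-sample guarantee with ĉ' ⪯_𝒞 ĉ and ĉ' ≢ ĉ. -/
open Filter Asymptotics

namespace DDO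

set_option linter.unusedSectionVars false
set_option maxHeartbeats 1000000

section capfun

noncomputable def cap (A s : ℝ) : ℝ := if s ≤ A then s else 2*A - A*Real.exp (1 - s/A)
noncomputable def capd (A s : ℝ) : ℝ := Real.exp (min (1 - s/A) 0)

variable {A : ℝ} (hA : 0 < A)
include hA

lemma cap_le_self (s : ℝ) : cap A s ≤ s := by
  unfold cap; split_ifs with h
  · exact le_rfl
  · push_neg at h
    have h1 : 1 + (1 - s/A) ≤ Real.exp (1 - s/A) := by
      have := Real.add_one_le_exp (1 - s/A); linarith
    have : A * (1 + (1 - s/A)) ≤ A * Real.exp (1 - s/A) :=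
      mul_le_mul_of_nonneg_left h1 hA.le
    have hs : A * (1 + (1 - s/A)) = 2*A - s := by field_simp; ring
    nlinarith
lemma cap_le_two (s : ℝ) : cap A s ≤ 2*A := by
  unfold cap; split_ifs with h
  · linarith
  · nlinarith [Real.exp_pos (1 - s/A)]

lemma min_le_cap (s : ℝ) : min s A ≤ cap A s := by
  unfold cap; split_ifs with h
  · exact min_le_left _ _
  · push_neg at h
    have h1 : 1 - s/A ≤ 0 := by
      rw [sub_nonpos, le_div_iff₀ hA]; linarith
    have := Real.exp_le_one_iff.mpr h1
    have : A * Real.exp (1 - s/A) ≤ A * 1 := mul_le_mul_of_nonneg_left this hA.le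
    have hm : min s A ≤ A := min_le_right _ _
    nlinarith

lemma abs_cap_le (s : ℝ) : |cap A s| ≤ |s| := by
  rcases le_or_gt s A with h | h
  · simp [cap, h]
  · have h1 : (0:ℝ) < A := hA
    have h2 : min s A ≤ cap A s := min_le_cap hA s
    have h3 : cap A s ≤ s := cap_le_self hA s
    have h4 : 0 < cap A s := lt_of_lt_of_le (lt_min (hA.trans h) hA) h2
    rw [abs_of_pos h4, abs_of_pos (lt_trans h1 h)]
    exact h3

lemma hasDerivAt_cap (s : ℝ) : HasDerivAt (cap A) (capd A s) s := by
  rcases lt_trichotomy s A with h | h | h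
  · have he : capd A s = 1 := by
      have : (1:ℝ) - s/A ≥ 0 := by rw [ge_iff_le, sub_nonneg, div_le_one hA]; exact h.le
      simp [capd, min_eq_right this, Real.exp_zero]
    rw [he]
    have : (fun t => t) =ᶠ[nhds s] cap A := by
      filter_upwards [Iio_mem_nhds h] with t ht
      simp [cap, le_of_lt (Set.mem_Iio.mp ht)]
    exact (hasDerivAt_id s).congr_of_eventuallyEq this.symm
  · subst h
    have hcapd : capd s s = 1 := by
      simp [capd, div_self (ne_of_gt hA)]
    have h1 : HasDerivWithinAt (cap s) 1 (Set.Iic s) s := by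
      refine (hasDerivWithinAt_id s _).congr (fun t ht => ?_) (by simp [cap])
      simp [cap, Set.mem_Iic.mp ht]
    have hg : HasDerivAt (fun t => 2*s - s*Real.exp (1 - t/s)) 1 s := by
      have ha1 : HasDerivAt (fun t : ℝ => 1 - t/s) (-(1/s)) s := by
        simpa using ((hasDerivAt_id s).div_const s).const_sub 1
      have h2 := (Real.hasDerivAt_exp (1 - s/s)).comp s ha1
      have h3 := (h2.const_mul s).const_sub (2*s)
      refine h3.congr_deriv ?_
      rw [div_self (ne_of_gt hA)]
      simp [Real.exp_zero]
      field_simp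
    have h2 : HasDerivWithinAt (cap s) 1 (Set.Ici s) s := by
      refine (hg.hasDerivWithinAt).congr (fun t ht => ?_) ?_
      · rcases eq_or_lt_of_le (Set.mem_Ici.mp ht) with h | h
        · subst h; simp [cap, div_self (ne_of_gt hA), Real.exp_zero]; ring
        · simp [cap, not_le.mpr h]
      · simp [cap, div_self (ne_of_gt hA), Real.exp_zero]; ring
    rw [hcapd]
    have := h1.union h2
    rw [Set.Iic_union_Ici] at this
    exact (hasDerivWithinAt_univ.mp this)
  · have he : capd A s = Real.exp (1 - s/A) := by
      have : (1:ℝ) - s/A ≤ 0 := by rw [sub_nonpos, le_div_iff₀ hA]; linarith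
      simp [capd, min_eq_left this]
    rw [he]
    have hg : HasDerivAt (fun t => 2*A - A*Real.exp (1 - t/A)) (Real.exp (1 - s/A)) s := by
      have h1 : HasDerivAt (fun t : ℝ => 1 - t/A) (-(1/A)) s := by
        simpa using ((hasDerivAt_id s).div_const A).const_sub 1
      have h2 := (Real.hasDerivAt_exp (1 - s/A)).comp s h1
      have h3 := (h2.const_mul A).const_sub (2*A)
      refine h3.congr_deriv ?_
      field_simp
    have : (fun t => 2*A - A*Real.exp (1 - t/A)) =ᶠ[nhds s] cap A := by
      filter_upwards [Ioi_mem_nhds h] with t ht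
      simp only [cap, if_neg (not_le.mpr (Set.mem_Ioi.mp ht))]
    exact hg.congr_of_eventuallyEq this.symm

lemma capd_pos (s : ℝ) : 0 < capd A s := Real.exp_pos _

lemma capd_le_one (s : ℝ) : capd A s ≤ 1 := by
  unfold capd
  rw [← Real.exp_zero]
  exact Real.exp_le_exp.mpr (min_le_right _ _)

omit hA in
lemma exp_lip {x y : ℝ} (hx : x ≤ 0) (hy : y ≤ 0) : |Real.exp x - Real.exp y| ≤ |x - y| := by
  wlog h : y ≤ x generalizing x y
  · rw [abs_sub_comm, abs_sub_comm x y]; exact this hy hx (le_of_not_ge h)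
  rw [abs_of_nonneg (sub_nonneg.mpr (Real.exp_le_exp.mpr h)), abs_of_nonneg (sub_nonneg.mpr h)]
  have h2 := Real.add_one_le_exp (y - x)
  have h3 : Real.exp y = Real.exp x * Real.exp (y - x) := by rw [← Real.exp_add]; ring_nf
  have h4 : Real.exp x ≤ 1 := Real.exp_le_one_iff.mpr hx
  nlinarith [Real.exp_pos x, Real.exp_pos (y - x)]

lemma capd_lip (s t : ℝ) : |capd A s - capd A t| ≤ |s - t| / A := by
  have h1 : |capd A s - capd A t| ≤ |min (1 - s/A) 0 - min (1 - t/A) 0| :=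
    exp_lip (min_le_right _ _) (min_le_right _ _)
  have h2 : |min (1 - s/A) 0 - min (1 - t/A) 0| ≤ |(1 - s/A) - (1 - t/A)| := by
    have := abs_min_sub_min_le_max (1 - s/A) (0:ℝ) (1 - t/A) (0:ℝ)
    simpa using this
  have h3 : |(1 - s/A) - (1 - t/A)| = |s - t| / A := by
    rw [show (1 - s/A) - (1 - t/A) = (t - s)/A by ring, abs_div, abs_of_pos hA, abs_sub_comm]
  calc |capd A s - capd A t| ≤ |(1 - s/A) - (1 - t/A)| := h1.trans h2
    _ = |s - t| / A := h3

lemma cap_lip (s t : ℝ) : |cap A s - cap A t| ≤ |s - t| := by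
  have hdiff : Differentiable ℝ (cap A) := fun y => (hasDerivAt_cap hA y).differentiableAt
  have hle : ∀ y, ‖deriv (cap A) y‖ ≤ 1 := by
    intro y
    rw [(hasDerivAt_cap hA y).deriv, Real.norm_eq_abs, abs_of_pos (capd_pos hA y)]
    exact capd_le_one hA y
  have hlip := lipschitzWith_of_nnnorm_deriv_le (C := 1) hdiff (fun y => by
    rw [← NNReal.coe_le_coe, coe_nnnorm]; simpa using hle y)
  have h2 := hlip.dist_le_mul s t
  simpa [Real.dist_eq] using h2

noncomputable def psi (A s : ℝ) : ℝ := cap A (-cap A (-s))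
noncomputable def psid (A s : ℝ) : ℝ := capd A (-cap A (-s)) * capd A (-s)

lemma abs_psi_le (s : ℝ) : |psi A s| ≤ |s| := by
  calc |psi A s| ≤ |-cap A (-s)| := abs_cap_le hA _
    _ = |cap A (-s)| := abs_neg _
    _ ≤ |-s| := abs_cap_le hA _
    _ = |s| := abs_neg _

lemma abs_psi_le_two (s : ℝ) : |psi A s| ≤ 2*A := by
  have h1 : psi A s ≤ 2*A := cap_le_two hA _
  have h2 : -(2*A) ≤ psi A s := by
    have h3 : cap A (-s) ≤ 2*A := cap_le_two hA _
    have h4 : min (-cap A (-s)) A ≤ psi A s := min_le_cap hA _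
    have : -(2*A) ≤ min (-cap A (-s)) A := le_min (by linarith) (by linarith)
    linarith
  rw [abs_le]; exact ⟨h2, h1⟩

lemma min_le_psi (s : ℝ) : min s A ≤ psi A s := by
  have h1 : cap A (-s) ≤ -s := cap_le_self hA _
  have h2 : s ≤ -cap A (-s) := by linarith
  have h3 : min (-cap A (-s)) A ≤ psi A s := min_le_cap hA _
  have : min s A ≤ min (-cap A (-s)) A := min_le_min h2 le_rfl
  linarith

lemma hasDerivAt_psi (s : ℝ) : HasDerivAt (fun t => psi A t) (psid A s) s := by
  have h1 : HasDerivAt (fun t : ℝ => -t) (-1 : ℝ) s := (hasDerivAt_id s).neg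
  have h2 : HasDerivAt (fun t : ℝ => cap A (-t)) (capd A (-s) * (-1)) s :=
    (hasDerivAt_cap hA (-s)).comp s h1
  have h3 : HasDerivAt (fun t : ℝ => -cap A (-t)) (capd A (-s)) s := by
    exact h2.neg.congr_deriv (by ring)
  have h4 : HasDerivAt (fun t : ℝ => cap A (-cap A (-t)))
      (capd A (-cap A (-s)) * capd A (-s)) s :=
    by have := (hasDerivAt_cap hA (-cap A (-s))).comp s h3; exact this
  exact h4

lemma psid_nonneg (s : ℝ) : 0 ≤ psid A s :=
  le_of_lt (mul_pos (capd_pos hA _) (capd_pos hA _))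

lemma psid_le_one (s : ℝ) : psid A s ≤ 1 := by
  have := capd_le_one hA (-cap A (-s))
  have := capd_le_one hA (-s)
  have := (capd_pos hA (-cap A (-s))).le
  have := (capd_pos hA (-s)).le
  calc psid A s ≤ 1 * capd A (-s) := by
        unfold psid; apply mul_le_mul_of_nonneg_right <;> assumption
    _ ≤ 1 := by simpa using capd_le_one hA (-s)

lemma psi_lip (s t : ℝ) : |psi A s - psi A t| ≤ |s - t| := by
  calc |psi A s - psi A t| ≤ |(-cap A (-s)) - (-cap A (-t))| := cap_lip hA _ _
    _ = |cap A (-s) - cap A (-t)| := by rw [← abs_neg]; ring_nf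
    _ ≤ |(-s) - (-t)| := cap_lip hA _ _
    _ = |s - t| := by rw [← abs_neg]; ring_nf

lemma psid_lip (s t : ℝ) : |psid A s - psid A t| ≤ 2 / A * |s - t| := by
  set c1 := capd A (-cap A (-s))
  set c2 := capd A (-s)
  set d1 := capd A (-cap A (-t))
  set d2 := capd A (-t)
  have key : psid A s - psid A t = (c1 - d1) * c2 + d1 * (c2 - d2) := by unfold psid; ring
  have hc2 : |c2| ≤ 1 := by
    rw [abs_of_pos (capd_pos hA _)]; exact capd_le_one hA _
  have hd1 : |d1| ≤ 1 := by
    rw [abs_of_pos (capd_pos hA _)]; exact capd_le_one hA _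
  have h1 : |c1 - d1| ≤ |s - t| / A := by
    have e1 := capd_lip hA (-cap A (-s)) (-cap A (-t))
    have e2 := cap_lip hA (-s) (-t)
    have e3 : |(-cap A (-s)) - (-cap A (-t))| = |cap A (-s) - cap A (-t)| := by
      rw [show (-cap A (-s)) - (-cap A (-t)) = -(cap A (-s) - cap A (-t)) by ring, abs_neg]
    have e4 : |(-s) - (-t)| = |s - t| := by rw [show (-s) - (-t) = -(s - t) by ring, abs_neg]
    rw [e3] at e1
    rw [e4] at e2
    exact e1.trans (by gcongr)
  have h2 : |c2 - d2| ≤ |s - t| / A := by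
    calc |c2 - d2| ≤ |(-s) - (-t)| / A := capd_lip hA _ _
      _ = |s - t| / A := by rw [show (-s) - (-t) = -(s - t) by ring, abs_neg]
  calc |psid A s - psid A t| ≤ |(c1 - d1) * c2| + |d1 * (c2 - d2)| := by
        rw [key]; exact abs_add_le _ _
    _ = |c1 - d1| * |c2| + |d1| * |c2 - d2| := by rw [abs_mul, abs_mul]
    _ ≤ (|s - t| / A) * 1 + 1 * (|s - t| / A) := by
        apply add_le_add
        · exact mul_le_mul h1 hc2 (abs_nonneg _) (by positivity)
        · exact mul_le_mul hd1 h2 (abs_nonneg _) zero_le_one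
    _ = 2 / A * |s - t| := by field_simp; ring


end capfun

section prob
variable {d : ℕ} {P : Fin d → ℝ} (hP : ∀ i, 0 ≤ P i)

lemma probT_congr {T : ℕ} {A B : (Fin T → Fin d) → Prop} (h : ∀ ω, A ω ↔ B ω) :
    probT P T A = probT P T B := by
  unfold probT
  exact Finset.sum_congr rfl fun ω _ => by
    classical rw [if_congr (h ω) rfl rfl]

include hP in
lemma probT_union_le {T : ℕ} {A B C : (Fin T → Fin d) → Prop}
    (h : ∀ ω, A ω → B ω ∨ C ω) :
    probT P T A ≤ probT P T B + probT P T C := by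
  classical
  unfold probT
  rw [← Finset.sum_add_distrib]
  apply Finset.sum_le_sum
  intro ω _
  have hprod : 0 ≤ ∏ t, P (ω t) := Finset.prod_nonneg fun t _ => hP (ω t)
  by_cases hA : A ω
  · rcases h ω hA with hB | hC
    · simp only [if_pos hA, if_pos hB]
      have : (0:ℝ) ≤ if C ω then ∏ t, P (ω t) else 0 := by positivity
      linarith
    · simp only [if_pos hA, if_pos hC]
      have : (0:ℝ) ≤ if B ω then ∏ t, P (ω t) else 0 := by positivity
      linarith
  · simp only [if_neg hA]
    positivity

lemma sum_prod_fn {T : ℕ} (F : Fin d → ℝ) :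
    ∑ ω : Fin T → Fin d, ∏ t, F (ω t) = (∑ i, F i) ^ T := by
  have h := Fintype.prod_sum (fun (_ : Fin T) (i : Fin d) => F i)
  rw [← h, Finset.prod_const, Finset.card_univ, Fintype.card_fin]

/-- empirical cost identity -/
lemma cost_empDist {X : Type*} (ℓ : X → Fin d → ℝ) (x : X) {T : ℕ} (ω : Fin T → Fin d) :
    cost ℓ x (empDist ω) = (∑ t, ℓ x (ω t)) / (T : ℝ) := by
  classical
  unfold cost empDist
  rw [Finset.sum_congr rfl (fun i (_ : i ∈ Finset.univ) => by
    rw [show ℓ x i * (((Finset.univ.filter (fun t => ω t = i)).card : ℝ) / (T : ℝ)) =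
      (ℓ x i * ((Finset.univ.filter (fun t => ω t = i)).card : ℝ)) / (T : ℝ) from by ring]),
    ← Finset.sum_div]
  congr 1
  have := Finset.sum_fiberwise (s := (Finset.univ : Finset (Fin T)))
    (g := fun t => ω t) (f := fun t => ℓ x (ω t))
  rw [← this]
  apply Finset.sum_congr rfl
  intro i _
  rw [Finset.sum_congr rfl (fun t ht => by
    rw [(Finset.mem_filter.mp ht).2]), Finset.sum_const, nsmul_eq_mul]
  ring

include hP in
lemma chernoff (hPsum : ∑ i, P i = 1) (g : Fin d → ℝ) (hmean : ∑ i, P i * g i = 0)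
    (B : ℝ) (hB : 0 < B) (hg : ∀ i, |g i| ≤ B) (δ : ℝ) (hδ : 0 < δ) :
    ∃ c0 > 0, ∀ T : ℕ,
      probT P T (fun ω => (T : ℝ) * δ < ∑ t, g (ω t)) ≤ Real.exp (-c0 * T) := by
  classical
  set lam := min (1/B) (2*δ/(3*B^2)) with hlam_def
  have hlam_pos : 0 < lam := lt_min (by positivity) (by positivity)
  have hlamB : lam * B ≤ 1 := by
    have := min_le_left (1/B) (2*δ/(3*B^2))
    calc lam * B ≤ (1/B) * B := by nlinarith
      _ = 1 := by field_simp
  have hlam2 : (3/4) * lam^2 * B^2 ≤ lam * δ / 2 := by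
    have h1 : lam ≤ 2*δ/(3*B^2) := min_le_right _ _
    have h2 : lam * (3*B^2) ≤ 2*δ := by
      rw [le_div_iff₀ (by positivity)] at h1
      linarith
    nlinarith [hlam_pos]
  refine ⟨lam * δ / 2, by positivity, fun T => ?_⟩
  -- step 1: pointwise bound
  have step1 : probT P T (fun ω => (T : ℝ) * δ < ∑ t, g (ω t)) ≤
      Real.exp (-(lam * ((T:ℝ) * δ))) * (∑ i, P i * Real.exp (lam * g i)) ^ T := by
    unfold probT
    rw [← sum_prod_fn (F := fun i => P i * Real.exp (lam * g i)), Finset.mul_sum]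
    apply Finset.sum_le_sum
    intro ω _
    have hprod : 0 ≤ ∏ t, P (ω t) := Finset.prod_nonneg fun t _ => hP (ω t)
    have hRHS : Real.exp (-(lam * ((T:ℝ) * δ))) * ∏ t, (P (ω t) * Real.exp (lam * g (ω t)))
        = Real.exp (lam * ((∑ t, g (ω t)) - (T:ℝ)*δ)) * ∏ t, P (ω t) := by
      rw [Finset.prod_mul_distrib, ← Real.exp_sum, ← Finset.mul_sum,
        show lam * ((∑ t, g (ω t)) - (T:ℝ)*δ) = lam * ∑ t, g (ω t) + (-(lam * ((T:ℝ) * δ))) from by ring,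
        Real.exp_add]
      ring
    rw [hRHS]
    split_ifs with hE
    · have h1 : (1:ℝ) ≤ Real.exp (lam * ((∑ t, g (ω t)) - (T:ℝ)*δ)) := by
        rw [← Real.exp_zero]
        apply Real.exp_le_exp.mpr
        have : 0 < (∑ t, g (ω t)) - (T:ℝ)*δ := by linarith
        positivity
      nlinarith
    · positivity
  -- step 2: mgf bound
  have step2 : ∑ i, P i * Real.exp (lam * g i) ≤ 1 + (3/4) * lam^2 * B^2 := by
    have hterm : ∀ i, P i * Real.exp (lam * g i) ≤
        P i * (1 + lam * g i + (3/4) * lam^2 * B^2) := by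
      intro i
      apply mul_le_mul_of_nonneg_left _ (hP i)
      have hx : |lam * g i| ≤ 1 := by
        rw [abs_mul, abs_of_pos hlam_pos]
        calc lam * |g i| ≤ lam * B := by nlinarith [hg i, abs_nonneg (g i)]
          _ ≤ 1 := hlamB
      have := Real.exp_bound hx (n := 2) (by norm_num)
      have hsum2 : ∑ m ∈ Finset.range 2, (lam * g i) ^ m / m.factorial = 1 + lam * g i := by
        simp [Finset.sum_range_succ]
      rw [hsum2] at this
      have h2 : Real.exp (lam * g i) - (1 + lam * g i) ≤ |lam * g i|^2 * (3 / (2 * 2)) := by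
        have := abs_le.mp this
        norm_num at this ⊢
        exact this.2
      have h3 : |lam * g i|^2 ≤ lam^2 * B^2 := by
        rw [abs_mul, mul_pow, abs_of_pos hlam_pos]
        have : |g i|^2 ≤ B^2 := by nlinarith [hg i, abs_nonneg (g i)]
        nlinarith [sq_nonneg lam]
      nlinarith
    calc ∑ i, P i * Real.exp (lam * g i) ≤ ∑ i, P i * (1 + lam * g i + (3/4) * lam^2 * B^2) :=
          Finset.sum_le_sum fun i _ => hterm i
      _ = ∑ i, (P i + lam * (P i * g i) + (3/4) * lam^2 * B^2 * P i) :=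
          Finset.sum_congr rfl fun i _ => by ring
      _ = (∑ i, P i) + lam * (∑ i, P i * g i) + (3/4) * lam^2 * B^2 * (∑ i, P i) := by
          rw [Finset.sum_add_distrib, Finset.sum_add_distrib, ← Finset.mul_sum, ← Finset.mul_sum]
      _ = 1 + (3/4) * lam^2 * B^2 := by rw [hPsum, hmean]; ring
  -- combine
  have hbase_nonneg : 0 ≤ ∑ i, P i * Real.exp (lam * g i) :=
    Finset.sum_nonneg fun i _ => mul_nonneg (hP i) (Real.exp_pos _).le
  have step3 : (∑ i, P i * Real.exp (lam * g i)) ^ T ≤ Real.exp ((3/4) * lam^2 * B^2 * T) := by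
    calc (∑ i, P i * Real.exp (lam * g i)) ^ T ≤ (1 + (3/4) * lam^2 * B^2) ^ T :=
          pow_le_pow_left₀ hbase_nonneg step2 T
      _ ≤ (Real.exp ((3/4) * lam^2 * B^2)) ^ T := by
          apply pow_le_pow_left₀ (by positivity)
          have := Real.add_one_le_exp ((3/4) * lam^2 * B^2)
          linarith
      _ = Real.exp ((3/4) * lam^2 * B^2 * T) := by
          rw [← Real.exp_nat_mul]; ring_nf
  calc probT P T (fun ω => (T : ℝ) * δ < ∑ t, g (ω t))
      ≤ Real.exp (-(lam * ((T:ℝ) * δ))) * (∑ i, P i * Real.exp (lam * g i)) ^ T := step1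
    _ ≤ Real.exp (-(lam * ((T:ℝ) * δ))) * Real.exp ((3/4) * lam^2 * B^2 * T) := by
        apply mul_le_mul_of_nonneg_left step3 (Real.exp_pos _).le
    _ = Real.exp (-(lam * ((T:ℝ) * δ)) + (3/4) * lam^2 * B^2 * T) := by rw [← Real.exp_add]
    _ ≤ Real.exp (-(lam * δ / 2) * T) := by
        apply Real.exp_le_exp.mpr
        have hT : (0:ℝ) ≤ T := Nat.cast_nonneg T
        nlinarith
end prob

section reg
variable {X : Type*} [MetricSpace X] [CompactSpace X] {d : ℕ}
  (ℓ : X → Fin d → ℝ) (hℓ : ∀ i, Continuous fun x => ℓ x i)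

include hℓ in
lemma exists_bound : ∃ M : ℝ, 0 ≤ M ∧ ∀ (x : X) (i : Fin d), |ℓ x i| ≤ M := by
  have h : ∀ i : Fin d, ∃ C : ℝ, ∀ x : X, |ℓ x i| ≤ C := by
    intro i
    have hc : Continuous fun x : X => |ℓ x i| := (hℓ i).abs
    rcases (isCompact_range hc).bddAbove with ⟨C, hC⟩
    exact ⟨C, fun x => hC ⟨x, rfl⟩⟩
  choose C hC using h
  refine ⟨∑ i, max (C i) 0, Finset.sum_nonneg fun i _ => le_max_right _ _, fun x i => ?_⟩
  calc |ℓ x i| ≤ C i := hC i x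
    _ ≤ max (C i) 0 := le_max_left _ _
    _ ≤ ∑ j, max (C j) 0 := Finset.single_le_sum (f := fun j => max (C j) 0) (fun j _ => le_max_right _ _) (Finset.mem_univ i)

include hℓ in
lemma ell_coord_cont (x : X) {ε : ℝ} (hε : 0 < ε) :
    ∃ δ > 0, ∀ x' : X, dist x x' < δ → ∀ i, |ℓ x i - ℓ x' i| < ε := by
  have hG : Continuous fun y : X => (fun i => ℓ y i) := continuous_pi hℓ
  have := (Metric.continuous_iff.mp hG) x ε hε
  rcases this with ⟨δ, hδ, h⟩
  refine ⟨δ, hδ, fun x' hx' i => ?_⟩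
  have h1 := h x' (by rwa [dist_comm])
  calc |ℓ x i - ℓ x' i| = dist (ℓ x' i) (ℓ x i) := by rw [Real.dist_eq, abs_sub_comm]
    _ ≤ dist (fun i => ℓ x' i) (fun i => ℓ x i) := dist_le_pi_dist _ _ i
    _ < ε := h1

omit [CompactSpace X] in
lemma cost_abs_le {M : ℝ} (hM : ∀ (x : X) (i : Fin d), |ℓ x i| ≤ M)
    (x : X) {P : Fin d → ℝ} (hP : P ∈ simplex d) : |cost ℓ x P| ≤ M := by
  calc |cost ℓ x P| ≤ ∑ i, |ℓ x i * P i| := Finset.abs_sum_le_sum_abs _ _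
    _ ≤ ∑ i, M * P i := Finset.sum_le_sum fun i _ => by
        rw [abs_mul, abs_of_nonneg (hP.1 i)]
        exact mul_le_mul_of_nonneg_right (hM x i) (hP.1 i)
    _ = M := by rw [← Finset.mul_sum, hP.2, mul_one]

omit [CompactSpace X] in
lemma simplex_coord_le_one {P : Fin d → ℝ} (hP : P ∈ simplex d) (i : Fin d) : P i ≤ 1 := by
  calc P i ≤ ∑ j, P j := Finset.single_le_sum (fun j _ => hP.1 j) (Finset.mem_univ i)
    _ = 1 := hP.2

include hℓ in
lemma cost_cont {M : ℝ} (hM0 : 0 ≤ M) (hM : ∀ (x : X) (i : Fin d), |ℓ x i| ≤ M)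
    (x : X) {P : Fin d → ℝ} (hP : P ∈ simplex d) {ε : ℝ} (hε : 0 < ε) :
    ∃ δ > 0, ∀ (x' : X) (P' : Fin d → ℝ), P' ∈ simplex d →
      dist x x' < δ → dist P P' < δ → |cost ℓ x P - cost ℓ x' P'| < ε := by
  rcases ell_coord_cont ℓ hℓ x (half_pos hε) with ⟨δ1, hδ1, h1⟩
  refine ⟨min δ1 (ε / (2 * (M * d + 1))), lt_min hδ1 (by positivity), fun x' P' hP' hx hp => ?_⟩
  have hx1 : dist x x' < δ1 := lt_of_lt_of_le hx (min_le_left _ _)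
  have hp1 : dist P P' < ε / (2 * (M * d + 1)) := lt_of_lt_of_le hp (min_le_right _ _)
  have key : cost ℓ x P - cost ℓ x' P' = (∑ i, (ℓ x i - ℓ x' i) * P i) + ∑ i, ℓ x' i * (P i - P' i) := by
    unfold cost
    rw [← Finset.sum_add_distrib, ← Finset.sum_sub_distrib]
    apply Finset.sum_congr rfl; intro i _; ring
  have b1 : |∑ i, (ℓ x i - ℓ x' i) * P i| ≤ ε / 2 := by
    calc |∑ i, (ℓ x i - ℓ x' i) * P i| ≤ ∑ i, |(ℓ x i - ℓ x' i) * P i| :=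
          Finset.abs_sum_le_sum_abs _ _
      _ ≤ ∑ i, (ε/2) * P i := Finset.sum_le_sum fun i _ => by
          rw [abs_mul, abs_of_nonneg (hP.1 i)]
          exact mul_le_mul_of_nonneg_right (h1 x' hx1 i).le (hP.1 i)
      _ = ε / 2 := by rw [← Finset.mul_sum, hP.2, mul_one]
  have b2 : |∑ i, ℓ x' i * (P i - P' i)| < ε / 2 := by
    have each : ∀ i, |ℓ x' i * (P i - P' i)| ≤ M * (ε / (2 * (M * d + 1))) := by
      intro i
      rw [abs_mul]
      have hPi : |P i - P' i| ≤ dist P P' := by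
        rw [← Real.dist_eq]; exact dist_le_pi_dist P P' i
      apply mul_le_mul (hM x' i) (hPi.trans hp1.le) (abs_nonneg _) hM0
    calc |∑ i, ℓ x' i * (P i - P' i)| ≤ ∑ i, |ℓ x' i * (P i - P' i)| :=
          Finset.abs_sum_le_sum_abs _ _
      _ ≤ ∑ _i : Fin d, M * (ε / (2 * (M * d + 1))) := Finset.sum_le_sum fun i _ => each i
      _ = d * (M * (ε / (2 * (M * d + 1)))) := by
          rw [Finset.sum_const, Finset.card_univ, Fintype.card_fin, nsmul_eq_mul]
      _ < ε / 2 := by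
          have hd : (0:ℝ) ≤ d := Nat.cast_nonneg d
          have hpos : (0:ℝ) < M * d + 1 := by nlinarith [mul_nonneg hM0 hd]
          have h4 : (d : ℝ) * (M * (ε / (2 * (M * d + 1)))) = (M * d) * ε / (2 * (M * d + 1)) := by ring
          rw [h4, div_lt_iff₀ (by positivity)]
          nlinarith [mul_nonneg hM0 hd, hε]
  calc |cost ℓ x P - cost ℓ x' P'| ≤ |∑ i, (ℓ x i - ℓ x' i) * P i| + |∑ i, ℓ x' i * (P i - P' i)| := by
        rw [key]; exact abs_add_le _ _
    _ < ε / 2 + ε / 2 := by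
        apply add_lt_add_of_le_of_lt b1 b2
    _ = ε := by ring

/-- the linear cost functional -/
noncomputable def Lmap (x : X) : (Fin d → ℝ) →L[ℝ] ℝ :=
  ∑ i, ℓ x i • (ContinuousLinearMap.proj i : (Fin d → ℝ) →L[ℝ] ℝ)

omit [CompactSpace X] in
lemma Lmap_apply (x : X) (Q : Fin d → ℝ) : Lmap ℓ x Q = cost ℓ x Q := by
  unfold Lmap cost
  rw [ContinuousLinearMap.sum_apply]
  apply Finset.sum_congr rfl
  intro i _
  simp [ContinuousLinearMap.proj_apply]

omit [CompactSpace X] in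
lemma Lmap_diff_norm_le {x x' : X} {c : ℝ} (hc : 0 ≤ c)
    (h : ∀ i, |ℓ x i - ℓ x' i| ≤ c) : ‖Lmap ℓ x - Lmap ℓ x'‖ ≤ d * c := by
  apply ContinuousLinearMap.opNorm_le_bound _ (by positivity)
  intro Q
  have happly : (Lmap ℓ x - Lmap ℓ x') Q = ∑ i, (ℓ x i - ℓ x' i) * Q i := by
    rw [ContinuousLinearMap.sub_apply, Lmap_apply, Lmap_apply]
    unfold cost
    rw [← Finset.sum_sub_distrib]
    apply Finset.sum_congr rfl; intro i _; ring
  rw [happly, Real.norm_eq_abs]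
  calc |∑ i, (ℓ x i - ℓ x' i) * Q i| ≤ ∑ i, |(ℓ x i - ℓ x' i) * Q i| :=
        Finset.abs_sum_le_sum_abs _ _
    _ ≤ ∑ _i : Fin d, c * ‖Q‖ := Finset.sum_le_sum fun i _ => by
        rw [abs_mul]
        exact mul_le_mul (h i) (norm_le_pi_norm Q i) (abs_nonneg _) hc
    _ = d * c * ‖Q‖ := by
        rw [Finset.sum_const, Finset.card_univ, Fintype.card_fin, nsmul_eq_mul]; ring

omit [CompactSpace X] in
lemma Lmap_norm_le {M : ℝ} (hM0 : 0 ≤ M) (hM : ∀ (x : X) (i : Fin d), |ℓ x i| ≤ M)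
    (x : X) : ‖Lmap ℓ x‖ ≤ d * M := by
  apply ContinuousLinearMap.opNorm_le_bound _ (by positivity)
  intro Q
  rw [Lmap_apply, Real.norm_eq_abs]
  calc |cost ℓ x Q| ≤ ∑ i, |ℓ x i * Q i| := Finset.abs_sum_le_sum_abs _ _
    _ ≤ ∑ _i : Fin d, M * ‖Q‖ := Finset.sum_le_sum fun i _ => by
        rw [abs_mul]
        exact mul_le_mul (hM x i) (norm_le_pi_norm Q i) (abs_nonneg _) hM0
    _ = d * M * ‖Q‖ := by
        rw [Finset.sum_const, Finset.card_univ, Fintype.card_fin, nsmul_eq_mul]; ring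

end reg

section ext

variable {X : Type*} [MetricSpace X] [CompactSpace X] {d : ℕ}
  (ℓ : X → Fin d → ℝ) (hℓ : ∀ i, Continuous fun x => ℓ x i)

include hℓ in
lemma tendsto_of_int {M : ℝ} (hM0 : 0 ≤ M) (hM : ∀ (x : X) (i : Fin d), |ℓ x i| ≤ M)
    (chat : X → (Fin d → ℝ) → ℕ → ℝ)
    (hequi : ∀ (x : X), ∀ P ∈ simplex d, ∀ ε > (0 : ℝ), ∃ δ > (0 : ℝ),
      ∀ (T : ℕ) (x' : X), ∀ P' ∈ simplex d,
        dist x x' < δ → dist P P' < δ → |chat x P T - chat x' P' T| < ε)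
    (hint : ∀ (x : X), ∀ P ∈ simplexInt d,
      Tendsto (fun T : ℕ => chat x P T) atTop (nhds (cost ℓ x P))) :
    ∀ (x : X), ∀ P ∈ simplex d,
      Tendsto (fun T : ℕ => chat x P T) atTop (nhds (cost ℓ x P)) := by
  intro x P hP
  have hd : 0 < d := by
    rcases Nat.eq_zero_or_pos d with h | h
    · exfalso
      have := hP.2
      subst h
      simp at this
    · exact h
  rw [Metric.tendsto_atTop]
  intro ε hε
  obtain ⟨δ1, hδ1, h1⟩ := hequi x P hP (ε/3) (by positivity)
  obtain ⟨δ2, hδ2, h2⟩ := cost_cont ℓ hℓ hM0 hM x hP (ε := ε/3) (by positivity)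
  set θ := min (min δ1 δ2 / 2) (1/2) with hθdef
  have hθpos : 0 < θ := lt_min (by positivity) (by norm_num)
  have hθ1 : θ ≤ 1 := le_trans (min_le_right _ _) (by norm_num)
  set P' := fun i : Fin d => (1 - θ) * P i + θ * (1/d) with hP'def
  have hP'int : P' ∈ simplexInt d := by
    constructor
    · intro i
      have : 0 ≤ (1 - θ) * P i := mul_nonneg (by linarith) (hP.1 i)
      have hpos : 0 < θ * (1/(d:ℝ)) := by positivity
      simp only [hP'def]
      linarith
    · simp only [hP'def]
      rw [Finset.sum_add_distrib, ← Finset.mul_sum, hP.2, Finset.sum_const,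
        Finset.card_univ, Fintype.card_fin, nsmul_eq_mul]
      field_simp
      ring
  have hdist : dist P P' ≤ θ := by
    rw [dist_pi_le_iff hθpos.le]
    intro i
    rw [Real.dist_eq]
    have hle1 : P i ≤ 1 := simplex_coord_le_one hP i
    have h1d : (0:ℝ) < 1/d := by positivity
    have h1d1 : (1:ℝ)/d ≤ 1 := by
      rw [div_le_one (by exact_mod_cast hd)]
      exact_mod_cast hd
    have : P i - P' i = θ * (P i - 1/d) := by simp only [hP'def]; ring
    rw [this, abs_mul, abs_of_pos hθpos]
    have : |P i - 1/(d:ℝ)| ≤ 1 := by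
      rw [abs_le]
      constructor <;> [linarith [hP.1 i]; linarith]
    nlinarith
  have hconv := hint x P' hP'int
  rw [Metric.tendsto_atTop] at hconv
  obtain ⟨N, hN⟩ := hconv (ε/3) (by positivity)
  refine ⟨N, fun T hT => ?_⟩
  have hdist1 : dist P P' < δ1 := lt_of_le_of_lt hdist
    (lt_of_le_of_lt (min_le_left _ _) (by
      have := lt_min hδ1 hδ2
      have hmin : 0 < min δ1 δ2 := lt_min hδ1 hδ2
      calc min δ1 δ2 / 2 < min δ1 δ2 := by linarith
        _ ≤ δ1 := min_le_left _ _))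
  have hdist2 : dist P P' < δ2 := lt_of_le_of_lt hdist
    (lt_of_le_of_lt (min_le_left _ _) (by
      have hmin : 0 < min δ1 δ2 := lt_min hδ1 hδ2
      calc min δ1 δ2 / 2 < min δ1 δ2 := by linarith
        _ ≤ δ2 := min_le_right _ _))
  have hP'simplex : P' ∈ simplex d := ⟨fun i => (hP'int.1 i).le, hP'int.2⟩
  have hxx : dist x x < δ1 := by rw [dist_self]; exact hδ1
  have hxx2 : dist x x < δ2 := by rw [dist_self]; exact hδ2
  have e1 : |chat x P T - chat x P' T| < ε/3 := h1 T x P' hP'simplex hxx hdist1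
  have e2 : |chat x P' T - cost ℓ x P'| < ε/3 := by
    have := hN T hT
    rwa [Real.dist_eq] at this
  have e3 : |cost ℓ x P' - cost ℓ x P| < ε/3 := by
    have := h2 x P' hP'simplex hxx2 hdist2
    rwa [abs_sub_comm] at this
  rw [Real.dist_eq]
  have t1 : |chat x P T - cost ℓ x P'| ≤ |chat x P T - chat x P' T| + |chat x P' T - cost ℓ x P'| :=
    abs_sub_le _ _ _
  have t2 : |chat x P T - cost ℓ x P| ≤ |chat x P T - cost ℓ x P'| + |cost ℓ x P' - cost ℓ x P| :=
    abs_sub_le _ _ _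
  linarith

end ext

/-- In the subexponential regime (`a_T → ∞`, `a_T/T → 0`), every weakly optimal
regular predictor is consistent: every regular predictor satisfying the out-of-sample
guarantee is either pointwise convergent to the true cost, or strictly dominated by
another regular predictor satisfying the guarantee. -/
theorem stmt_3 {X : Type*} [MetricSpace X] [CompactSpace X] {d : ℕ}
    (ℓ : X → Fin d → ℝ) (hℓ : ∀ i, Continuous fun x => ℓ x i)
    (a : ℕ → ℝ) (ha_pos : ∀ T, 0 < a T)
    (ha_top : Tendsto a atTop atTop)
    (ha_sub : Tendsto (fun T : ℕ => a T / (T : ℝ)) atTop (nhds 0)) :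
    ∀ chat : X → (Fin d → ℝ) → ℕ → ℝ,
      IsRegularPredictor d chat → OOSGuarantee ℓ a chat →
        (∀ (x : X), ∀ P ∈ simplex d,
            Tendsto (fun T : ℕ => chat x P T) atTop (nhds (cost ℓ x P))) ∨
          ∃ chat' : X → (Fin d → ℝ) → ℕ → ℝ,
            IsRegularPredictor d chat' ∧ OOSGuarantee ℓ a chat' ∧
              PredOrder ℓ chat' chat ∧ ¬PredEquiv ℓ chat' chat := by
  intro chat hreg hoos
  by_cases hconv : ∀ (x : X), ∀ P ∈ simplex d,
      Tendsto (fun T : ℕ => chat x P T) atTop (nhds (cost ℓ x P))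
  · exact Or.inl hconv
  right
  obtain ⟨M, hM0, hM⟩ := exists_bound ℓ hℓ
  obtain ⟨Kc, hKc⟩ := hreg.unifBounded
  have hequi := hreg.equicontinuous
  obtain ⟨D, hD, ⟨KD, hKD⟩, hDequi⟩ := hreg.differentiableDeriv
  -- an interior point where convergence fails
  obtain ⟨x0, P0, hP0, hbad⟩ : ∃ x0 : X, ∃ P0, P0 ∈ simplexInt d ∧
      ¬ Tendsto (fun T : ℕ => chat x0 P0 T) atTop (nhds (cost ℓ x0 P0)) := by
    by_contra hcon
    push_neg at hcon
    exact hconv (tendsto_of_int ℓ hℓ hM0 hM chat hequi hcon)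
  -- a frequent deviation
  obtain ⟨δ0, hδ0, hfq⟩ : ∃ δ0 > (0:ℝ), ∀ N : ℕ, ∃ T ≥ N,
      δ0 ≤ |chat x0 P0 T - cost ℓ x0 P0| := by
    by_contra hcon
    push_neg at hcon
    apply hbad
    rw [Metric.tendsto_atTop]
    intro ε hε
    obtain ⟨N, hN⟩ := hcon ε hε
    exact ⟨N, fun T hT => by rw [Real.dist_eq]; exact hN T hT⟩
  set A := δ0 / 4 with hAdef
  have hA : 0 < A := by positivity
  set chat' := fun (x : X) (Q : Fin d → ℝ) (T : ℕ) =>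
    cost ℓ x Q + psi A (chat x Q T - cost ℓ x Q) with hchat'def
  refine ⟨chat', ?_, ?_, ?_, ?_⟩
  -- 1. regularity
  · constructor
    · -- uniform boundedness
      refine ⟨M + 2*A, fun T x P hP => ?_⟩
      have h1 : |cost ℓ x P| ≤ M := cost_abs_le ℓ hM x hP
      have h2 : |psi A (chat x P T - cost ℓ x P)| ≤ 2*A := abs_psi_le_two hA _
      calc |chat' x P T| ≤ |cost ℓ x P| + |psi A (chat x P T - cost ℓ x P)| := abs_add_le _ _
        _ ≤ M + 2*A := add_le_add h1 h2
    · -- equicontinuity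
      intro x P hP ε hε
      obtain ⟨δ1, hδ1, h1⟩ := hequi x P hP (ε/3) (by positivity)
      obtain ⟨δ2, hδ2, h2⟩ := cost_cont ℓ hℓ hM0 hM x hP (ε := ε/3) (by positivity)
      refine ⟨min δ1 δ2, lt_min hδ1 hδ2, fun T x' P' hP' hx hp => ?_⟩
      have hx1 := lt_of_lt_of_le hx (min_le_left _ _)
      have hx2 := lt_of_lt_of_le hx (min_le_right _ _)
      have hp1 := lt_of_lt_of_le hp (min_le_left _ _)
      have hp2 := lt_of_lt_of_le hp (min_le_right _ _)
      have e1 : |chat x P T - chat x' P' T| < ε/3 := h1 T x' P' hP' hx1 hp1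
      have e2 : |cost ℓ x P - cost ℓ x' P'| < ε/3 := h2 x' P' hP' hx2 hp2
      have e3 : |psi A (chat x P T - cost ℓ x P) - psi A (chat x' P' T - cost ℓ x' P')|
          ≤ |(chat x P T - cost ℓ x P) - (chat x' P' T - cost ℓ x' P')| := psi_lip hA _ _
      have e4 : |(chat x P T - cost ℓ x P) - (chat x' P' T - cost ℓ x' P')|
          ≤ |chat x P T - chat x' P' T| + |cost ℓ x P - cost ℓ x' P'| := by
        have : (chat x P T - cost ℓ x P) - (chat x' P' T - cost ℓ x' P')
            = (chat x P T - chat x' P' T) - (cost ℓ x P - cost ℓ x' P') := by ring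
        rw [this]
        exact abs_sub _ _
      have e5 : |chat' x P T - chat' x' P' T| ≤ |cost ℓ x P - cost ℓ x' P'|
          + |psi A (chat x P T - cost ℓ x P) - psi A (chat x' P' T - cost ℓ x' P')| := by
        have : chat' x P T - chat' x' P' T = (cost ℓ x P - cost ℓ x' P')
            + (psi A (chat x P T - cost ℓ x P) - psi A (chat x' P' T - cost ℓ x' P')) := by
          simp only [hchat'def]; ring
        rw [this]
        exact abs_add_le _ _
      linarith
    · -- differentiability
      refine ⟨fun x P T => Lmap ℓ x
        + psid A (chat x P T - cost ℓ x P) • (D x P T - Lmap ℓ x), ?_, ?_, ?_⟩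
      · intro T x P hP
        have hcost : HasFDerivWithinAt (fun Q => cost ℓ x Q) (Lmap ℓ x) (simplex d) P := by
          have heq : (fun Q => cost ℓ x Q) = fun Q => Lmap ℓ x Q :=
            funext fun Q => (Lmap_apply ℓ x Q).symm
          rw [heq]
          exact (Lmap ℓ x).hasFDerivAt.hasFDerivWithinAt
        have hs : HasFDerivWithinAt (fun Q => chat x Q T - cost ℓ x Q)
            (D x P T - Lmap ℓ x) (simplex d) P := (hD T x P hP).sub hcost
        have hpsi := hasDerivAt_psi hA (chat x P T - cost ℓ x P)
        have hcomp := hpsi.comp_hasFDerivWithinAt P hs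
        have := hcost.add hcomp
        exact this
      · refine ⟨d*M + (KD + d*M), fun T x P hP => ?_⟩
        have hL : ‖Lmap ℓ x‖ ≤ d*M := Lmap_norm_le ℓ hM0 hM x
        have hKD0 : 0 ≤ KD := le_trans (norm_nonneg _) (hKD T x P hP)
        have h1 : ‖psid A (chat x P T - cost ℓ x P) • (D x P T - Lmap ℓ x)‖
            ≤ KD + d*M := by
          rw [norm_smul (psid A (chat x P T - cost ℓ x P)) (D x P T - Lmap ℓ x),
            Real.norm_eq_abs, abs_of_nonneg (psid_nonneg hA _)]
          calc psid A (chat x P T - cost ℓ x P) * ‖D x P T - Lmap ℓ x‖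
              ≤ 1 * (KD + d*M) := by
                apply mul_le_mul (psid_le_one hA _) _ (norm_nonneg _) zero_le_one
                calc ‖D x P T - Lmap ℓ x‖ ≤ ‖D x P T‖ + ‖Lmap ℓ x‖ := norm_sub_le _ _
                  _ ≤ KD + d*M := add_le_add (hKD T x P hP) hL
            _ = KD + d*M := one_mul _
        calc ‖Lmap ℓ x + psid A (chat x P T - cost ℓ x P) • (D x P T - Lmap ℓ x)‖
            ≤ ‖Lmap ℓ x‖ + ‖psid A (chat x P T - cost ℓ x P) • (D x P T - Lmap ℓ x)‖ :=
              norm_add_le _ _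
          _ ≤ d*M + (KD + d*M) := add_le_add hL h1
      · intro x P hP ε hε
        set C1 := KD + (d:ℝ)*M + 1 with hC1def
        have hKD0 : 0 ≤ KD := le_trans (norm_nonneg _) (hKD 0 x P hP)
        have hC1 : 0 < C1 := by positivity
        set εs := ε * A / (10 * C1) with hεsdef
        have hεs : 0 < εs := by positivity
        obtain ⟨δD, hδD, hDe⟩ := hDequi x P hP (ε/5) (by positivity)
        obtain ⟨δc, hδc, hce⟩ := ell_coord_cont ℓ hℓ x (ε := ε/(5*((d:ℝ)+1))) (by positivity)
        obtain ⟨δs1, hδs1, hs1⟩ := hequi x P hP (εs/2) (by positivity)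
        obtain ⟨δs2, hδs2, hs2⟩ := cost_cont ℓ hℓ hM0 hM x hP (ε := εs/2) (by positivity)
        refine ⟨min (min δD δc) (min δs1 δs2), by positivity, fun T x' P' hP' hx hp => ?_⟩
        have hxD := lt_of_lt_of_le hx (le_trans (min_le_left _ _) (min_le_left _ _))
        have hxc := lt_of_lt_of_le hx (le_trans (min_le_left _ _) (min_le_right _ _))
        have hxs1 := lt_of_lt_of_le hx (le_trans (min_le_right _ _) (min_le_left _ _))
        have hxs2 := lt_of_lt_of_le hx (le_trans (min_le_right _ _) (min_le_right _ _))
        have hpD := lt_of_lt_of_le hp (le_trans (min_le_left _ _) (min_le_left _ _))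
        have hps1 := lt_of_lt_of_le hp (le_trans (min_le_right _ _) (min_le_left _ _))
        have hps2 := lt_of_lt_of_le hp (le_trans (min_le_right _ _) (min_le_right _ _))
        set s1 := chat x P T - cost ℓ x P with hs1def
        set s2 := chat x' P' T - cost ℓ x' P' with hs2def
        -- bound on ΔL
        have hLd : ‖Lmap ℓ x - Lmap ℓ x'‖ ≤ ε/5 := by
          have := Lmap_diff_norm_le ℓ (c := ε/(5*((d:ℝ)+1))) (by positivity)
            (fun i => (hce x' hxc i).le)
          apply le_trans this
          have hd0 : (0:ℝ) ≤ d := Nat.cast_nonneg d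
          rw [← mul_div_assoc, div_le_div_iff₀ (by positivity) (by norm_num : (0:ℝ) < 5)]
          nlinarith
        -- bound on Δs
        have hss : |s1 - s2| ≤ εs := by
          have e1 : |chat x P T - chat x' P' T| < εs/2 := hs1 T x' P' hP' hxs1 hps1
          have e2 : |cost ℓ x P - cost ℓ x' P'| < εs/2 := hs2 x' P' hP' hxs2 hps2
          have : s1 - s2 = (chat x P T - chat x' P' T) - (cost ℓ x P - cost ℓ x' P') := by
            simp only [hs1def, hs2def]; ring
          rw [this]
          calc |(chat x P T - chat x' P' T) - (cost ℓ x P - cost ℓ x' P')|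
              ≤ |chat x P T - chat x' P' T| + |cost ℓ x P - cost ℓ x' P'| := abs_sub _ _
            _ ≤ εs := by linarith
        -- bound on ‖D - L‖
        have hDL : ‖D x P T - Lmap ℓ x‖ ≤ C1 := by
          calc ‖D x P T - Lmap ℓ x‖ ≤ ‖D x P T‖ + ‖Lmap ℓ x‖ := norm_sub_le _ _
            _ ≤ KD + (d:ℝ)*M := add_le_add (hKD T x P hP) (Lmap_norm_le ℓ hM0 hM x)
            _ ≤ C1 := by simp only [hC1def]; linarith
        -- decomposition
        have hdecomp : (Lmap ℓ x + psid A s1 • (D x P T - Lmap ℓ x))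
            - (Lmap ℓ x' + psid A s2 • (D x' P' T - Lmap ℓ x'))
            = (Lmap ℓ x - Lmap ℓ x') + ((psid A s1 - psid A s2) • (D x P T - Lmap ℓ x)
              + psid A s2 • ((D x P T - Lmap ℓ x) - (D x' P' T - Lmap ℓ x'))) := by
          ext Q
          simp only [ContinuousLinearMap.add_apply, ContinuousLinearMap.sub_apply,
            ContinuousLinearMap.smul_apply, smul_eq_mul]
          ring
        have hb1 : ‖(psid A s1 - psid A s2) • (D x P T - Lmap ℓ x)‖ ≤ ε/5 := by
          rw [norm_smul (psid A s1 - psid A s2) (D x P T - Lmap ℓ x), Real.norm_eq_abs]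
          have h1 : |psid A s1 - psid A s2| ≤ 2/A * εs := by
            calc |psid A s1 - psid A s2| ≤ 2/A * |s1 - s2| := psid_lip hA _ _
              _ ≤ 2/A * εs := by
                  apply mul_le_mul_of_nonneg_left hss (by positivity)
          have h2 : 2/A * εs * C1 = ε/5 := by
            simp only [hεsdef]
            field_simp
            ring
          calc |psid A s1 - psid A s2| * ‖D x P T - Lmap ℓ x‖ ≤ (2/A * εs) * C1 :=
              mul_le_mul h1 hDL (norm_nonneg _) (by positivity)
            _ = ε/5 := h2
        have hb2 : ‖psid A s2 • ((D x P T - Lmap ℓ x) - (D x' P' T - Lmap ℓ x'))‖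
            ≤ ε/5 + ε/5 := by
          rw [norm_smul (psid A s2) ((D x P T - Lmap ℓ x) - (D x' P' T - Lmap ℓ x')),
            Real.norm_eq_abs, abs_of_nonneg (psid_nonneg hA _)]
          have hsub : ‖(D x P T - Lmap ℓ x) - (D x' P' T - Lmap ℓ x')‖
              ≤ ‖D x P T - D x' P' T‖ + ‖Lmap ℓ x - Lmap ℓ x'‖ := by
            have : (D x P T - Lmap ℓ x) - (D x' P' T - Lmap ℓ x')
                = (D x P T - D x' P' T) - (Lmap ℓ x - Lmap ℓ x') := by abel
            rw [this]
            exact norm_sub_le _ _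
          have hDd : ‖D x P T - D x' P' T‖ < ε/5 := hDe T x' P' hP' hxD hpD
          calc psid A s2 * ‖(D x P T - Lmap ℓ x) - (D x' P' T - Lmap ℓ x')‖
              ≤ 1 * (‖D x P T - D x' P' T‖ + ‖Lmap ℓ x - Lmap ℓ x'‖) :=
                mul_le_mul (psid_le_one hA _) hsub (norm_nonneg _) zero_le_one
            _ ≤ ε/5 + ε/5 := by rw [one_mul]; exact add_le_add hDd.le hLd
        calc ‖(Lmap ℓ x + psid A s1 • (D x P T - Lmap ℓ x))
              - (Lmap ℓ x' + psid A s2 • (D x' P' T - Lmap ℓ x'))‖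
            ≤ ‖Lmap ℓ x - Lmap ℓ x'‖ + (‖(psid A s1 - psid A s2) • (D x P T - Lmap ℓ x)‖
              + ‖psid A s2 • ((D x P T - Lmap ℓ x) - (D x' P' T - Lmap ℓ x'))‖) := by
              rw [hdecomp]
              exact le_trans (norm_add_le _ _) (by
                apply add_le_add_right
                exact norm_add_le _ _)
          _ < ε := by linarith
  -- 2. OOS guarantee
  · intro x P hP ε hε
    set g := fun i => cost ℓ x P - ℓ x i with hgdef
    set B := 2*M + 1 with hBdef
    have hB : 0 < B := by positivity
    have hPs : P ∈ simplex d := ⟨fun i => (hP.1 i).le, hP.2⟩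
    have hmean : ∑ i, P i * g i = 0 := by
      simp only [hgdef]
      have : ∀ i, P i * (cost ℓ x P - ℓ x i) = P i * cost ℓ x P - ℓ x i * P i := by
        intro i; ring
      rw [Finset.sum_congr rfl fun i _ => this i, Finset.sum_sub_distrib,
        ← Finset.sum_mul, hP.2, one_mul]
      have : cost ℓ x P = ∑ i, ℓ x i * P i := rfl
      rw [← this, sub_self]
    have hg : ∀ i, |g i| ≤ B := by
      intro i
      simp only [hgdef, hBdef]
      calc |cost ℓ x P - ℓ x i| ≤ |cost ℓ x P| + |ℓ x i| := abs_sub _ _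
        _ ≤ M + M := add_le_add (cost_abs_le ℓ hM x hPs) (hM x i)
        _ ≤ 2*M + 1 := by linarith
    obtain ⟨c0, hc0, hch⟩ := chernoff (fun i => (hP.1 i).le) hP.2 g hmean B hB hg A hA
    have hE1 := hoos x P hP (ε/2) (by positivity)
    have hT1 : ∀ᶠ T : ℕ in atTop, 1 ≤ T := eventually_ge_atTop 1
    have hsubc : ∀ᶠ T : ℕ in atTop, a T / (T:ℝ) < c0 := by
      have := Metric.tendsto_nhds.mp ha_sub c0 hc0
      filter_upwards [this] with T hT
      rw [Real.dist_eq, sub_zero] at hT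
      exact lt_of_le_of_lt (le_abs_self _) hT
    have hlog : ∀ᶠ T : ℕ in atTop, Real.log 2 ≤ (ε/2) * a T := by
      filter_upwards [ha_top.eventually_ge_atTop (2 * Real.log 2 / ε)] with T hT
      rw [div_le_iff₀ hε] at hT
      nlinarith [ha_pos T]
    filter_upwards [hE1, hT1, hsubc, hlog] with T h1 h2 h3 h4
    have hTpos : (0:ℝ) < T := by exact_mod_cast h2
    -- event inclusion
    have hincl : ∀ ω : Fin T → Fin d, (cost ℓ x P > chat' x (empDist ω) T) →
        (cost ℓ x P > chat x (empDist ω) T) ∨ ((T:ℝ) * A < ∑ t, g (ω t)) := by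
      intro ω hω
      set Q := empDist ω with hQdef
      have hpsi : min (chat x Q T - cost ℓ x Q) A ≤ psi A (chat x Q T - cost ℓ x Q) :=
        min_le_psi hA _
      rcases le_total (chat x Q T - cost ℓ x Q) A with hc | hc
      · left
        have : min (chat x Q T - cost ℓ x Q) A = chat x Q T - cost ℓ x Q := min_eq_left hc
        rw [this] at hpsi
        have : chat x Q T ≤ chat' x Q T := by
          simp only [hchat'def]
          linarith
        linarith [hω]
      · right
        have hmin : min (chat x Q T - cost ℓ x Q) A = A := min_eq_right hc
        rw [hmin] at hpsi
        have hQA : cost ℓ x Q + A ≤ chat' x Q T := by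
          simp only [hchat'def]
          linarith
        have hcQ : cost ℓ x P - cost ℓ x Q > A := by linarith [hω]
        have hsum : ∑ t, g (ω t) = (T:ℝ) * (cost ℓ x P - cost ℓ x Q) := by
          simp only [hgdef]
          rw [Finset.sum_sub_distrib, Finset.sum_const, Finset.card_univ,
            Fintype.card_fin, nsmul_eq_mul]
          rw [hQdef, cost_empDist ℓ x ω]
          have hT0 : (T:ℝ) ≠ 0 := ne_of_gt hTpos
          field_simp
        rw [hsum]
        exact (mul_lt_mul_of_pos_left hcQ hTpos)
    have hunion := probT_union_le (fun i => (hP.1 i).le) hincl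
    have hch2 : probT P T (fun ω => (T:ℝ) * A < ∑ t, g (ω t)) ≤ Real.exp (-c0 * T) := hch T
    have hexp2 : Real.exp (-c0 * T) ≤ Real.exp ((-1 + ε/2) * a T) := by
      apply Real.exp_le_exp.mpr
      have haT : a T < c0 * T := by
        rw [div_lt_iff₀ hTpos] at h3
        exact h3
      nlinarith [ha_pos T]
    calc probT P T (fun ω => cost ℓ x P > chat' x (empDist ω) T)
        ≤ probT P T (fun ω => cost ℓ x P > chat x (empDist ω) T)
          + probT P T (fun ω => (T:ℝ) * A < ∑ t, g (ω t)) := hunion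
      _ ≤ Real.exp ((-1 + ε/2) * a T) + Real.exp ((-1 + ε/2) * a T) := by
          apply add_le_add h1 (le_trans hch2 hexp2)
      _ = Real.exp (Real.log 2 + (-1 + ε/2) * a T) := by
          rw [Real.exp_add, Real.exp_log (by norm_num : (0:ℝ) < 2)]
          ring
      _ ≤ Real.exp ((-1 + ε) * a T) := by
          apply Real.exp_le_exp.mpr
          nlinarith [ha_pos T]
  -- 3. PredOrder
  · intro x P hP ε hε
    apply Filter.Eventually.of_forall
    intro T
    have herr : predErr ℓ chat' x P T = |psi A (chat x P T - cost ℓ x P)| := by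
      unfold predErr
      congr 1
      simp only [hchat'def]
      ring
    have hle : predErr ℓ chat' x P T ≤ predErr ℓ chat x P T := by
      rw [herr]
      unfold predErr
      exact abs_psi_le hA _
    unfold ratio
    split_ifs with h
    · linarith
    · rcases eq_or_lt_of_le (abs_nonneg (chat x P T - cost ℓ x P)) with hv | hv
      · have hv0 : predErr ℓ chat x P T = 0 := by unfold predErr; exact hv.symm
        rw [hv0, div_zero]
        positivity
      · have hv0 : 0 < predErr ℓ chat x P T := hv
        have hr : predErr ℓ chat' x P T / predErr ℓ chat x P T ≤ 1 := by
          rw [div_le_one hv0]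
          exact hle
        linarith
  -- 4. not PredEquiv
  · intro hPE
    have h := hPE x0 P0 hP0
    have hlo : (fun T => predErr ℓ chat' x0 P0 T - predErr ℓ chat x0 P0 T)
        =o[atTop] (fun T => predErr ℓ chat x0 P0 T) := h.isLittleO
    have heven := hlo.def (by norm_num : (0:ℝ) < 1/4)
    have hfq' : ∃ᶠ T in atTop, δ0 ≤ |chat x0 P0 T - cost ℓ x0 P0| :=
      frequently_atTop.mpr hfq
    obtain ⟨T, hT1, hT2⟩ := (hfq'.and_eventually heven).exists
    set v := predErr ℓ chat x0 P0 T with hvdef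
    set u := predErr ℓ chat' x0 P0 T with hudef
    have hv : δ0 ≤ v := hT1
    have hu : u ≤ 2*A := by
      have : u = |psi A (chat x0 P0 T - cost ℓ x0 P0)| := by
        simp only [hudef]
        unfold predErr
        congr 1
        simp only [hchat'def]
        ring
      rw [this]
      exact abs_psi_le_two hA _
    have h2A : 2*A = δ0/2 := by rw [hAdef]; ring
    rw [Real.norm_eq_abs, Real.norm_eq_abs] at hT2
    have hvu : v - u ≤ |u - v| := by
      rw [abs_sub_comm]
      exact le_abs_self _
    have hvv : |v| = v := abs_of_nonneg (abs_nonneg _)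
    rw [hvv] at hT2
    linarith

end DDO
end

section
/- (DRO interpretation of SVP.) For every x ∈ 𝒳, P ∈ 𝒫°, and T ∈ ℕ large enough that √(2a_T/T) ≤ (min_{i∈Σ} P(i)) · (min_{i∈Σ} min(P(i), 1−P(i))), the SVP predictor admits the distributionally robust representation ĉ_V(x,P,T) = sup{ c(x,P') : P' ∈ 𝒫, ‖P'−P‖_P² ≤ a_T/T }. Moreover, if Var_P(ℓ(x,ξ)) > 0, the supremum is attained: ĉ_V(x,P,T) = c(x, P + √(2a_T/T)·φ_x(P)), where φ_x(P) ∈ ℝ^d has entries φ_x(P)_i := (ℓ(x,i)·P(i) − c(x,P)·P(i)) / √(Var_P(ℓ(x,ξ))), and φ_x(P) satisfies ‖√2·φ_x(P)‖_P = 1 and c(x,φ_x(P)) = √(Var_P(ℓ(x,ξ))). -/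
open Filter Asymptotics

namespace DDO

/-- DRO interpretation of SVP: for `T` large enough, the SVP predictor equals the
DRO predictor over the local ellipsoid `‖P' - P‖_P² ≤ a_T/T`, and when the variance
is positive the supremum is attained at `P + √(2a_T/T)·φ_x(P)`, where `φ_x(P)`
satisfies `‖√2·φ_x(P)‖_P = 1` and `c(x, φ_x(P)) = √(Var_P(ℓ(x,ξ)))`. -/
theorem stmt_4 {X : Type*} [MetricSpace X] [CompactSpace X] {d : ℕ}
    (ℓ : X → Fin d → ℝ) (hℓ : ∀ i, Continuous fun x => ℓ x i)
    (a : ℕ → ℝ) (ha_pos : ∀ T, 0 < a T)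
    (x : X) (P : Fin d → ℝ) (hP : P ∈ simplexInt d)
    (T : ℕ) (hT : 0 < T)
    (hTlarge : ∀ i j : Fin d,
      Real.sqrt (2 * a T / (T : ℝ)) ≤ P i * min (P j) (1 - P j)) :
    cV a ℓ x P T =
        sSup {y | ∃ P' ∈ simplex d,
          ellNormSq P (P' - P) ≤ a T / (T : ℝ) ∧ y = cost ℓ x P'} ∧
      (0 < varLoss ℓ x P →
        ∀ φ : Fin d → ℝ,
          φ = (fun i =>
              (ℓ x i * P i - cost ℓ x P * P i) / Real.sqrt (varLoss ℓ x P)) →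
            (fun i => P i + Real.sqrt (2 * a T / (T : ℝ)) * φ i) ∈ simplex d ∧
            ellNormSq P (fun i => Real.sqrt (2 * a T / (T : ℝ)) * φ i) ≤
              a T / (T : ℝ) ∧
            cV a ℓ x P T =
              cost ℓ x (fun i => P i + Real.sqrt (2 * a T / (T : ℝ)) * φ i) ∧
            Real.sqrt (ellNormSq P fun i => Real.sqrt 2 * φ i) = 1 ∧
            cost ℓ x φ = Real.sqrt (varLoss ℓ x P)) := by
  classical
  obtain ⟨hPpos, hPsum⟩ := hP
  have hTpos : (0:ℝ) < T := by exact_mod_cast hT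
  have hrpos : 0 < 2 * a T / (T:ℝ) := by
    have := ha_pos T; positivity
  set s : ℝ := Real.sqrt (2 * a T / (T : ℝ)) with hsdef
  have hs_pos : 0 < s := Real.sqrt_pos.mpr hrpos
  have hs2 : s ^ 2 = 2 * a T / (T:ℝ) := Real.sq_sqrt hrpos.le
  set c : ℝ := cost ℓ x P with hcdef
  set V : ℝ := varLoss ℓ x P with hVdef
  set φ : Fin d → ℝ := fun i => (ℓ x i * P i - c * P i) / Real.sqrt V with hφdef
  have hcsum : (∑ i, ℓ x i * P i) = c := rfl
  have hVeq : (∑ i, ℓ x i ^ 2 * P i) - c ^ 2 = V := rfl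
  have hVar : V = ∑ i, (ℓ x i - c) ^ 2 * P i := by
    have h1 : ∑ i, (ℓ x i - c) ^ 2 * P i
        = ((∑ i, ℓ x i ^ 2 * P i) - 2 * c * (∑ i, ℓ x i * P i))
          + c ^ 2 * (∑ i, P i) := by
      rw [Finset.mul_sum, Finset.mul_sum, ← Finset.sum_sub_distrib,
        ← Finset.sum_add_distrib]
      exact Finset.sum_congr rfl fun i _ => by ring
    rw [h1, hPsum, hcsum, ← hVeq]; ring
  have hVnn : 0 ≤ V := by
    rw [hVar]
    exact Finset.sum_nonneg fun i _ => mul_nonneg (sq_nonneg _) (hPpos i).le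
  have hPle1 : ∀ i, P i ≤ 1 := by
    intro i
    rw [← hPsum]
    exact Finset.single_le_sum (f := P) (fun j _ => (hPpos j).le) (Finset.mem_univ i)
  have hsleP : ∀ i, s ≤ P i := by
    intro i
    calc s ≤ P i * min (P i) (1 - P i) := hTlarge i i
      _ ≤ P i * P i := mul_le_mul_of_nonneg_left (min_le_left _ _) (hPpos i).le
      _ ≤ P i * 1 := mul_le_mul_of_nonneg_left (hPle1 i) (hPpos i).le
      _ = P i := mul_one _
  have hsleSqrtP : ∀ i, s ≤ Real.sqrt (P i) := by
    intro i
    refine le_trans (hsleP i) ?_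
    nlinarith [Real.sq_sqrt (hPpos i).le, Real.sqrt_le_one.mpr (hPle1 i),
      Real.sqrt_nonneg (P i)]
  -- Cauchy-Schwarz upper bound
  have keyCS : ∀ P' : Fin d → ℝ, P' ∈ simplex d →
      ellNormSq P (P' - P) ≤ a T / (T:ℝ) →
      cost ℓ x P' ≤ c + Real.sqrt (2 * a T / (T:ℝ) * V) := by
    rintro P' ⟨hP'nn, hP'sum⟩ hell
    have hDsum : ∑ i, (P' i - P i) = 0 := by
      rw [Finset.sum_sub_distrib, hPsum, hP'sum]; ring
    have hcost : cost ℓ x P' = c + ∑ i, (ℓ x i - c) * (P' i - P i) := by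
      have h2 : ∑ i, (ℓ x i - c) * (P' i - P i)
          = (∑ i, (ℓ x i * P' i - ℓ x i * P i)) - c * ∑ i, (P' i - P i) := by
        rw [Finset.mul_sum, ← Finset.sum_sub_distrib]
        exact Finset.sum_congr rfl fun i _ => by ring
      rw [h2, hDsum, Finset.sum_sub_distrib, hcsum]
      show cost ℓ x P' = c + ((∑ i, ℓ x i * P' i) - c - c * 0)
      rw [show cost ℓ x P' = ∑ i, ℓ x i * P' i from rfl]; ring
    have hCS : (∑ i, (ℓ x i - c) * (P' i - P i)) ^ 2
        ≤ V * (∑ i, (P' i - P i) ^ 2 / P i) := by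
      have h := Finset.sum_mul_sq_le_sq_mul_sq Finset.univ
        (fun i => (ℓ x i - c) * Real.sqrt (P i))
        (fun i => (P' i - P i) / Real.sqrt (P i))
      have e1 : ∀ i : Fin d, ((ℓ x i - c) * Real.sqrt (P i)) *
          ((P' i - P i) / Real.sqrt (P i)) = (ℓ x i - c) * (P' i - P i) := by
        intro i
        have hne : Real.sqrt (P i) ≠ 0 := (Real.sqrt_pos.mpr (hPpos i)).ne'
        field_simp
      have e2 : ∀ i : Fin d, ((ℓ x i - c) * Real.sqrt (P i)) ^ 2
          = (ℓ x i - c) ^ 2 * P i := by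
        intro i; rw [mul_pow, Real.sq_sqrt (hPpos i).le]
      have e3 : ∀ i : Fin d, ((P' i - P i) / Real.sqrt (P i)) ^ 2
          = (P' i - P i) ^ 2 / P i := by
        intro i; rw [div_pow, Real.sq_sqrt (hPpos i).le]
      rw [Finset.sum_congr rfl fun i _ => e1 i,
        Finset.sum_congr rfl fun i _ => e2 i,
        Finset.sum_congr rfl fun i _ => e3 i, ← hVar] at h
      exact h
    have hellsum : ∑ i, (P' i - P i) ^ 2 / P i ≤ 2 * (a T / (T:ℝ)) := by
      have heq : ellNormSq P (P' - P) = (1/2) * ∑ i, (P' i - P i) ^ 2 / P i := rfl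
      rw [heq] at hell
      linarith
    have hsq : (∑ i, (ℓ x i - c) * (P' i - P i)) ^ 2 ≤ 2 * a T / (T:ℝ) * V := by
      calc (∑ i, (ℓ x i - c) * (P' i - P i)) ^ 2
          ≤ V * (∑ i, (P' i - P i) ^ 2 / P i) := hCS
        _ ≤ V * (2 * (a T / (T:ℝ))) := mul_le_mul_of_nonneg_left hellsum hVnn
        _ = 2 * a T / (T:ℝ) * V := by ring
    have hle : ∑ i, (ℓ x i - c) * (P' i - P i)
        ≤ Real.sqrt (2 * a T / (T:ℝ) * V) := by
      calc (∑ i, (ℓ x i - c) * (P' i - P i))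
          ≤ |∑ i, (ℓ x i - c) * (P' i - P i)| := le_abs_self _
        _ = Real.sqrt ((∑ i, (ℓ x i - c) * (P' i - P i)) ^ 2) :=
            (Real.sqrt_sq_eq_abs _).symm
        _ ≤ _ := Real.sqrt_le_sqrt hsq
    rw [hcost]; linarith
  have hsqrtmul : Real.sqrt (2 * a T / (T:ℝ) * V) = s * Real.sqrt V := by
    rw [Real.sqrt_mul hrpos.le]
  have hcV : cV a ℓ x P T = c + Real.sqrt (2 * a T / (T:ℝ) * V) := by
    rw [cV, ← hVdef, ← hcdef]
  by_cases hVpos : 0 < V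
  · -- positive variance case
    have hsV : 0 < Real.sqrt V := Real.sqrt_pos.mpr hVpos
    have hVne : V ≠ 0 := hVpos.ne'
    have hnum : ∑ i, (ℓ x i * P i - c * P i) = 0 := by
      rw [Finset.sum_sub_distrib, hcsum, ← Finset.mul_sum, hPsum]; ring
    have hφsum : ∑ i, φ i = 0 := by
      simp only [hφdef]
      rw [← Finset.sum_div, hnum, zero_div]
    have eφ : ∀ i : Fin d, φ i ^ 2 / P i = (ℓ x i - c) ^ 2 * P i / V := by
      intro i
      simp only [hφdef]
      rw [div_pow, Real.sq_sqrt hVnn, div_div,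
        div_eq_div_iff (mul_pos hVpos (hPpos i)).ne' hVne]
      ring
    have hsumφsq : ∑ i, φ i ^ 2 / P i = 1 := by
      rw [Finset.sum_congr rfl fun i _ => eφ i, ← Finset.sum_div, ← hVar,
        div_self hVne]
    have hcostφ : cost ℓ x φ = Real.sqrt V := by
      have hnum2 : ∑ i, ℓ x i * φ i
          = (∑ i, (ℓ x i ^ 2 * P i - c * (ℓ x i * P i))) / Real.sqrt V := by
        rw [Finset.sum_div]
        refine Finset.sum_congr rfl fun i _ => ?_
        simp only [hφdef]; ring
      have hnum3 : ∑ i, (ℓ x i ^ 2 * P i - c * (ℓ x i * P i)) = V := by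
        rw [Finset.sum_sub_distrib, ← Finset.mul_sum, hcsum, ← hVeq]; ring
      rw [show cost ℓ x φ = ∑ i, ℓ x i * φ i from rfl, hnum2, hnum3,
        Real.div_sqrt]
    have hterm : ∀ i, (ℓ x i - c) ^ 2 * P i ≤ V := by
      intro i; rw [hVar]
      exact Finset.single_le_sum (f := fun j => (ℓ x j - c) ^ 2 * P j)
        (fun j _ => mul_nonneg (sq_nonneg _) (hPpos j).le) (Finset.mem_univ i)
    have hkey : ∀ i, s * |ℓ x i - c| ≤ Real.sqrt V := by
      intro i
      calc s * |ℓ x i - c| ≤ Real.sqrt (P i) * |ℓ x i - c| :=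
            mul_le_mul_of_nonneg_right (hsleSqrtP i) (abs_nonneg _)
        _ = Real.sqrt ((ℓ x i - c) ^ 2 * P i) := by
            rw [Real.sqrt_mul (sq_nonneg _), Real.sqrt_sq_eq_abs]; ring
        _ ≤ Real.sqrt V := Real.sqrt_le_sqrt (hterm i)
    have hQnn : ∀ i, 0 ≤ P i + s * φ i := by
      intro i
      have habs : |s * φ i| ≤ P i := by
        have hφabs : |φ i| = |ℓ x i - c| * P i / Real.sqrt V := by
          simp only [hφdef]
          rw [abs_div, abs_of_nonneg (Real.sqrt_nonneg V),
            show ℓ x i * P i - c * P i = (ℓ x i - c) * P i by ring, abs_mul,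
            abs_of_nonneg (hPpos i).le]
        rw [abs_mul, abs_of_nonneg hs_pos.le, hφabs, mul_div_assoc',
          div_le_iff₀ hsV]
        calc s * (|ℓ x i - c| * P i) = (s * |ℓ x i - c|) * P i := by ring
          _ ≤ Real.sqrt V * P i :=
              mul_le_mul_of_nonneg_right (hkey i) (hPpos i).le
          _ = P i * Real.sqrt V := mul_comm _ _
      have := neg_abs_le (s * φ i)
      linarith
    have hQsum : ∑ i, (P i + s * φ i) = 1 := by
      rw [Finset.sum_add_distrib, hPsum, ← Finset.mul_sum, hφsum]; ring
    have hQmem : (fun i => P i + s * φ i) ∈ simplex d := ⟨hQnn, hQsum⟩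
    have hellφ : ellNormSq P (fun i => s * φ i) = a T / (T:ℝ) := by
      rw [ellNormSq]
      have e : ∀ i : Fin d, (s * φ i) ^ 2 / P i = s ^ 2 * (φ i ^ 2 / P i) := by
        intro i; rw [mul_pow]; ring
      rw [Finset.sum_congr rfl fun i _ => e i, ← Finset.mul_sum, hsumφsq, hs2]
      ring
    have hcostQ : cost ℓ x (fun i => P i + s * φ i) = c + s * Real.sqrt V := by
      rw [show cost ℓ x (fun i => P i + s * φ i)
          = ∑ i, ℓ x i * (P i + s * φ i) from rfl]
      have e : ∀ i : Fin d, ℓ x i * (P i + s * φ i)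
          = ℓ x i * P i + s * (ℓ x i * φ i) := fun i => by ring
      rw [Finset.sum_congr rfl fun i _ => e i, Finset.sum_add_distrib, hcsum,
        ← Finset.mul_sum, show (∑ i, ℓ x i * φ i) = Real.sqrt V from hcostφ]
    have hcV' : cV a ℓ x P T = c + s * Real.sqrt V := by rw [hcV, hsqrtmul]
    have hQP : (fun i => P i + s * φ i) - P = fun i => s * φ i := by
      funext i
      show (P i + s * φ i) - P i = s * φ i
      ring
    have hub : ∀ y ∈ {y | ∃ P' ∈ simplex d,
        ellNormSq P (P' - P) ≤ a T / (T : ℝ) ∧ y = cost ℓ x P'},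
        y ≤ c + s * Real.sqrt V := by
      rintro y ⟨P', hP', hell, rfl⟩
      have := keyCS P' hP' hell
      rwa [hsqrtmul] at this
    have hmem : (c + s * Real.sqrt V) ∈ {y | ∃ P' ∈ simplex d,
        ellNormSq P (P' - P) ≤ a T / (T : ℝ) ∧ y = cost ℓ x P'} := by
      refine ⟨(fun i => P i + s * φ i), hQmem, ?_, hcostQ.symm⟩
      rw [hQP, hellφ]
    constructor
    · rw [hcV']
      exact (le_antisymm (csSup_le ⟨_, hmem⟩ hub)
        (le_csSup ⟨c + s * Real.sqrt V, hub⟩ hmem)).symm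
    · intro _ φ' hφ'
      subst hφ'
      exact ⟨hQmem, le_of_eq hellφ, by rw [hcV', hcostQ], by
        have h2 : (Real.sqrt 2) ^ 2 = (2:ℝ) := Real.sq_sqrt (by norm_num)
        have hval : ellNormSq P (fun i => Real.sqrt 2 * φ i) = 1 := by
          rw [ellNormSq]
          have e : ∀ i : Fin d, (Real.sqrt 2 * φ i) ^ 2 / P i
              = 2 * (φ i ^ 2 / P i) := by
            intro i; rw [mul_pow, h2]; ring
          rw [Finset.sum_congr rfl fun i _ => e i, ← Finset.mul_sum, hsumφsq]
          norm_num
        rw [hval, Real.sqrt_one], hcostφ⟩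
  · -- zero variance case
    have hVz : V = 0 := le_antisymm (not_lt.mp hVpos) hVnn
    have hsum0 : ∑ i, (ℓ x i - c) ^ 2 * P i = 0 := by rw [← hVar, hVz]
    have hℓc : ∀ i, ℓ x i = c := by
      intro i
      have h0 : (ℓ x i - c) ^ 2 * P i = 0 :=
        (Finset.sum_eq_zero_iff_of_nonneg
          (fun j _ => mul_nonneg (sq_nonneg _) (hPpos j).le)).mp hsum0 i
          (Finset.mem_univ i)
      have h1 : (ℓ x i - c) ^ 2 = 0 :=
        (mul_eq_zero.mp h0).resolve_right (hPpos i).ne'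
      have h2 : ℓ x i - c = 0 := by
        have := sq_eq_zero_iff.mp h1
        exact this
      linarith
    have hcost0 : ∀ P' : Fin d → ℝ, (∑ i, P' i) = 1 → cost ℓ x P' = c := by
      intro P' hsum'
      rw [show cost ℓ x P' = ∑ i, ℓ x i * P' i from rfl,
        Finset.sum_congr rfl (fun i _ => by rw [hℓc i]), ← Finset.mul_sum,
        hsum', mul_one]
    have hPmem : c ∈ {y | ∃ P' ∈ simplex d,
        ellNormSq P (P' - P) ≤ a T / (T : ℝ) ∧ y = cost ℓ x P'} := by
      refine ⟨P, ⟨fun i => (hPpos i).le, hPsum⟩, ?_, hcdef⟩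
      have : ellNormSq P (P - P) = 0 := by simp [ellNormSq]
      rw [this]
      exact (div_pos (ha_pos T) hTpos).le
    have hub : ∀ y ∈ {y | ∃ P' ∈ simplex d,
        ellNormSq P (P' - P) ≤ a T / (T : ℝ) ∧ y = cost ℓ x P'}, y ≤ c := by
      rintro y ⟨P', hP', _, rfl⟩
      exact (hcost0 P' hP'.2).le
    refine ⟨?_, fun h => absurd h hVpos⟩
    have hcVz : cV a ℓ x P T = c := by
      rw [hcV, hVz, mul_zero, Real.sqrt_zero, add_zero]
    rw [hcVz]
    exact (le_antisymm (csSup_le ⟨c, hPmem⟩ hub) (le_csSup ⟨c, hub⟩ hPmem)).symm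

end DDO
end

section
/- Let (a_T) be a sequence of positive reals with a_T → ∞ and a_T/T → 0 (the subexponential regime). The SVP predictor ĉ_V satisfies the out-of-sample guarantee: limsup_{T→∞} (1/a_T)·log ℙ^∞( c(x,P) > ĉ_V(x,P̂_T,T) ) ≤ −1 for every x ∈ 𝒳 and P ∈ 𝒫°. -/
open Filter Asymptotics

namespace DDO

section AuxSVP

variable {d T : ℕ} {P : Fin d → ℝ}

lemma sum_pow_eq (h : Fin d → ℝ) (T : ℕ) :
    ∑ ω : Fin T → Fin d, ∏ t, h (ω t) = (∑ i, h i) ^ T := by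
  have : (∑ i, h i) ^ T = ∏ _t : Fin T, (∑ i, h i) := by
    simp [Finset.prod_const]
  rw [this, Finset.prod_univ_sum]
  simp

lemma prod_nonneg_of (h0 : ∀ i, 0 ≤ P i) (ω : Fin T → Fin d) :
    0 ≤ ∏ t, P (ω t) :=
  Finset.prod_nonneg fun t _ => h0 (ω t)

lemma probT_nonneg (h0 : ∀ i, 0 ≤ P i) (A : (Fin T → Fin d) → Prop) :
    0 ≤ probT P T A := by
  refine Finset.sum_nonneg fun ω _ => ?_
  classical
  split
  · exact prod_nonneg_of h0 ω
  · exact le_refl 0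

lemma probT_mono (h0 : ∀ i, 0 ≤ P i) {A B : (Fin T → Fin d) → Prop}
    (h : ∀ ω, A ω → B ω) : probT P T A ≤ probT P T B := by
  refine Finset.sum_le_sum fun ω _ => ?_
  classical
  by_cases hA : A ω
  · rw [if_pos hA, if_pos (h ω hA)]
  · rw [if_neg hA]
    split
    · exact prod_nonneg_of h0 ω
    · exact le_refl 0

lemma probT_or_le (h0 : ∀ i, 0 ≤ P i) {A B : (Fin T → Fin d) → Prop} :
    probT P T (fun ω => A ω ∨ B ω) ≤ probT P T A + probT P T B := by
  classical
  rw [probT, probT, probT, ← Finset.sum_add_distrib]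
  refine Finset.sum_le_sum fun ω _ => ?_
  by_cases hA : A ω <;> by_cases hB : B ω <;>
    simp [hA, hB, prod_nonneg_of h0 ω]

lemma probT_exists_le {n : ℕ} (h0 : ∀ i, 0 ≤ P i)
    (A : Fin n → (Fin T → Fin d) → Prop) :
    probT P T (fun ω => ∃ i, A i ω) ≤ ∑ i, probT P T (A i) := by
  classical
  have key : ∀ ω : Fin T → Fin d,
      (@ite ℝ (∃ i, A i ω) (Classical.propDecidable _) (∏ t, P (ω t)) 0) ≤
        ∑ i, @ite ℝ (A i ω) (Classical.propDecidable _) (∏ t, P (ω t)) 0 := by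
    intro ω
    by_cases h : ∃ i, A i ω
    · obtain ⟨i0, hi0⟩ := h
      rw [if_pos ⟨i0, hi0⟩]
      have h2 : @ite ℝ (A i0 ω) (Classical.propDecidable _) (∏ t, P (ω t)) 0 ≤
          ∑ i, @ite ℝ (A i ω) (Classical.propDecidable _) (∏ t, P (ω t)) 0 := by
        refine Finset.single_le_sum (f := fun i =>
          @ite ℝ (A i ω) (Classical.propDecidable _) (∏ t, P (ω t)) 0)
          (fun i _ => ?_) (Finset.mem_univ i0)
        split
        · exact prod_nonneg_of h0 ω
        · exact le_refl 0
      rw [if_pos hi0] at h2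
      exact h2
    · rw [if_neg h]
      refine Finset.sum_nonneg fun i _ => ?_
      split
      · exact prod_nonneg_of h0 ω
      · exact le_refl 0
  calc probT P T (fun ω => ∃ i, A i ω)
      ≤ ∑ ω : Fin T → Fin d,
          ∑ i, @ite ℝ (A i ω) (Classical.propDecidable _) (∏ t, P (ω t)) 0 :=
        Finset.sum_le_sum fun ω _ => key ω
    _ = ∑ i, probT P T (A i) := by
        simp only [probT]
        exact Finset.sum_comm

lemma sum_comp_eq_fiber (ω : Fin T → Fin d) (F : Fin d → ℝ) :
    ∑ t, F (ω t) = ∑ i, F i * ((Finset.univ.filter (fun t => ω t = i)).card : ℝ) := by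
  rw [← Finset.sum_fiberwise Finset.univ ω (fun t => F (ω t))]
  refine Finset.sum_congr rfl fun i _ => ?_
  have inner : ∑ t ∈ Finset.univ.filter (fun t => ω t = i), F (ω t) =
      ∑ _t ∈ Finset.univ.filter (fun t => ω t = i), F i :=
    Finset.sum_congr rfl fun t ht => by rw [(Finset.mem_filter.mp ht).2]
  rw [inner, Finset.sum_const, nsmul_eq_mul, mul_comm]

lemma chernoff_s6 (h0 : ∀ i, 0 ≤ P i) (g : Fin d → ℝ) (lam s : ℝ) (hlam : 0 ≤ lam) :
    probT P T (fun ω => (T : ℝ) * s ≤ ∑ t, g (ω t)) ≤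
      (∑ i, P i * Real.exp (lam * (g i - s))) ^ T := by
  classical
  rw [← sum_pow_eq (fun i => P i * Real.exp (lam * (g i - s))), probT]
  refine Finset.sum_le_sum fun ω _ => ?_
  have hprod : ∏ t, (P (ω t) * Real.exp (lam * (g (ω t) - s))) =
      (∏ t, P (ω t)) * Real.exp (lam * ((∑ t, g (ω t)) - (T : ℝ) * s)) := by
    rw [Finset.prod_mul_distrib, ← Real.exp_sum, ← Finset.mul_sum,
      Finset.sum_sub_distrib, Finset.sum_const, Finset.card_univ, Fintype.card_fin,
      nsmul_eq_mul]
  split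
  · rename_i hA
    rw [hprod]
    refine le_mul_of_one_le_right (prod_nonneg_of h0 ω) ?_
    rw [← Real.exp_zero]
    exact Real.exp_le_exp.mpr (mul_nonneg hlam (by linarith))
  · exact Finset.prod_nonneg fun t _ =>
      mul_nonneg (h0 (ω t)) (Real.exp_nonneg _)

lemma mgf_le (h0 : ∀ i, 0 ≤ P i) (h1 : ∑ i, P i = 1) (g : Fin d → ℝ)
    (hmean : ∑ i, P i * g i = 0) (M lam : ℝ)
    (hM : ∀ i, |g i| ≤ M) (hlam : 0 ≤ lam) (hlamM : lam * M ≤ 1) :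
    ∑ i, P i * Real.exp (lam * g i) ≤
      Real.exp (lam ^ 2 * (1 / 2 + 2 / 9 * (lam * M)) * ∑ i, P i * g i ^ 2) := by
  set C : ℝ := lam ^ 2 * (1 / 2 + 2 / 9 * (lam * M)) with hC
  have key : ∀ i, Real.exp (lam * g i) ≤ 1 + lam * g i + C * g i ^ 2 := by
    intro i
    have hx : |lam * g i| ≤ 1 := by
      rw [abs_mul, abs_of_nonneg hlam]
      exact le_trans (mul_le_mul_of_nonneg_left (hM i) hlam) hlamM
    have hb := Real.exp_bound hx (n := 3) (by norm_num)
    have hsum3 : ∑ m ∈ Finset.range 3, (lam * g i) ^ m / (m.factorial : ℝ) =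
        1 + lam * g i + (lam * g i) ^ 2 / 2 := by
      simp [Finset.sum_range_succ]
    rw [hsum3] at hb
    have hb2 : Real.exp (lam * g i) ≤ 1 + lam * g i + (lam * g i) ^ 2 / 2 +
        |lam * g i| ^ 3 * (2 / 9 : ℝ) := by
      have h3 : (((3 : ℕ).succ : ℝ) / (((3 : ℕ).factorial : ℝ) * (3 : ℕ)) : ℝ) = 2 / 9 := by
        norm_num [Nat.factorial]
      rw [h3] at hb
      have := abs_le.mp hb
      linarith [this.2]
    have habs : |lam * g i| ^ 3 = (lam * g i) ^ 2 * |lam * g i| := by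
      rw [pow_succ, sq_abs]
    have h5 : |lam * g i| ≤ lam * M := by
      rw [abs_mul, abs_of_nonneg hlam]
      exact mul_le_mul_of_nonneg_left (hM i) hlam
    have hcube : |lam * g i| ^ 3 * (2 / 9 : ℝ) ≤ 2 / 9 * (lam * M) * (lam ^ 2 * g i ^ 2) := by
      calc |lam * g i| ^ 3 * (2 / 9 : ℝ)
          = 2 / 9 * ((lam * g i) ^ 2 * |lam * g i|) := by rw [habs]; ring
        _ ≤ 2 / 9 * ((lam * g i) ^ 2 * (lam * M)) := by
            refine mul_le_mul_of_nonneg_left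
              (mul_le_mul_of_nonneg_left h5 (sq_nonneg _)) (by norm_num)
        _ = 2 / 9 * (lam * M) * (lam ^ 2 * g i ^ 2) := by ring
    calc Real.exp (lam * g i)
        ≤ 1 + lam * g i + (lam * g i) ^ 2 / 2 + |lam * g i| ^ 3 * (2 / 9 : ℝ) := hb2
      _ ≤ 1 + lam * g i + (lam * g i) ^ 2 / 2 + 2 / 9 * (lam * M) * (lam ^ 2 * g i ^ 2) := by
          linarith
      _ = 1 + lam * g i + C * g i ^ 2 := by rw [hC]; ring
  have e2 : ∑ i, P i * (lam * g i) = 0 := by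
    have : ∑ i, P i * (lam * g i) = lam * ∑ i, P i * g i := by
      rw [Finset.mul_sum]
      exact Finset.sum_congr rfl fun i _ => by ring
    rw [this, hmean, mul_zero]
  have e3 : ∑ i, P i * (C * g i ^ 2) = C * ∑ i, P i * g i ^ 2 := by
    rw [Finset.mul_sum]
    exact Finset.sum_congr rfl fun i _ => by ring
  calc ∑ i, P i * Real.exp (lam * g i)
      ≤ ∑ i, P i * (1 + lam * g i + C * g i ^ 2) :=
        Finset.sum_le_sum fun i _ => mul_le_mul_of_nonneg_left (key i) (h0 i)
    _ = ∑ i, (P i + (P i * (lam * g i) + P i * (C * g i ^ 2))) :=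
        Finset.sum_congr rfl fun i _ => by ring
    _ = 1 + C * ∑ i, P i * g i ^ 2 := by
        rw [Finset.sum_add_distrib, Finset.sum_add_distrib, h1, e2, e3, zero_add]
    _ ≤ Real.exp (C * ∑ i, P i * g i ^ 2) := by
        linarith [Real.add_one_le_exp (C * ∑ i, P i * g i ^ 2)]


lemma bernstein (h0 : ∀ i, 0 ≤ P i) (h1 : ∑ i, P i = 1) (g : Fin d → ℝ)
    (hmean : ∑ i, P i * g i = 0) (M lam : ℝ) (hM : ∀ i, |g i| ≤ M)
    (hlam : 0 ≤ lam) (hlamM : lam * M ≤ 1) (s : ℝ) :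
    probT P T (fun ω => (T : ℝ) * s ≤ ∑ t, g (ω t)) ≤
      Real.exp ((T : ℝ) *
        (lam ^ 2 * (1 / 2 + 2 / 9 * (lam * M)) * (∑ i, P i * g i ^ 2) - lam * s)) := by
  calc probT P T (fun ω => (T : ℝ) * s ≤ ∑ t, g (ω t))
      ≤ (∑ i, P i * Real.exp (lam * (g i - s))) ^ T := chernoff_s6 h0 g lam s hlam
    _ ≤ (Real.exp (lam ^ 2 * (1 / 2 + 2 / 9 * (lam * M)) *
          (∑ i, P i * g i ^ 2) - lam * s)) ^ T := by
        refine pow_le_pow_left₀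
          (Finset.sum_nonneg fun i _ => mul_nonneg (h0 i) (Real.exp_nonneg _)) ?_ T
        have hfac : ∀ i : Fin d, P i * Real.exp (lam * (g i - s)) =
            (P i * Real.exp (lam * g i)) * Real.exp (-(lam * s)) := by
          intro i
          have harg : lam * (g i - s) = lam * g i + -(lam * s) := by ring
          rw [harg, Real.exp_add]; ring
        rw [Finset.sum_congr rfl fun i _ => hfac i, ← Finset.sum_mul]
        calc (∑ i, P i * Real.exp (lam * g i)) * Real.exp (-(lam * s))
            ≤ Real.exp (lam ^ 2 * (1 / 2 + 2 / 9 * (lam * M)) * (∑ i, P i * g i ^ 2)) *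
                Real.exp (-(lam * s)) :=
              mul_le_mul_of_nonneg_right (mgf_le h0 h1 g hmean M lam hM hlam hlamM)
                (Real.exp_nonneg _)
          _ = Real.exp (lam ^ 2 * (1 / 2 + 2 / 9 * (lam * M)) *
                (∑ i, P i * g i ^ 2) - lam * s) := by
              rw [← Real.exp_add]; ring_nf
    _ = Real.exp ((T : ℝ) * (lam ^ 2 * (1 / 2 + 2 / 9 * (lam * M)) *
          (∑ i, P i * g i ^ 2) - lam * s)) := (Real.exp_nat_mul _ T).symm

end AuxSVP

set_option maxHeartbeats 1600000 in
lemma svp_oos_aux {X : Type*} {d : ℕ}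
    (ℓ : X → Fin d → ℝ)
    (a : ℕ → ℝ) (ha_pos : ∀ T, 0 < a T)
    (ha_top : Tendsto a atTop atTop)
    (ha_sub : Tendsto (fun T : ℕ => a T / (T : ℝ)) atTop (nhds 0)) :
    OOSGuarantee ℓ a (cV a ℓ) := by
  intro x P hP ε hεfull
  -- reduce to ε ≤ 1
  obtain ⟨ε', hε'def⟩ : ∃ e : ℝ, e = min ε 1 := ⟨_, rfl⟩
  have hε'pos : 0 < ε' := by rw [hε'def]; exact lt_min hεfull one_pos
  have hε'le1 : ε' ≤ 1 := by rw [hε'def]; exact min_le_right _ _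
  suffices h : ∀ᶠ T : ℕ in atTop,
      probT P T (fun ω => cost ℓ x P > cV a ℓ x (empDist ω) T) ≤
        Real.exp ((-1 + ε') * a T) by
    filter_upwards [h] with T hT
    refine hT.trans (Real.exp_le_exp.mpr ?_)
    have h1 := ha_pos T
    have h2 : ε' ≤ ε := by rw [hε'def]; exact min_le_left _ _
    nlinarith only [h1, h2, mul_nonneg (sub_nonneg.mpr h2) h1.le]
  obtain ⟨hPpos, hPsum⟩ := hP
  have h0 : ∀ i, 0 ≤ P i := fun i => (hPpos i).le
  have hPle1 : ∀ i, P i ≤ 1 := by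
    intro i
    calc P i ≤ ∑ j, P j :=
          Finset.single_le_sum (f := P) (fun j _ => h0 j) (Finset.mem_univ i)
      _ = 1 := hPsum
  -- variance identity
  have hvar : ∑ i, P i * (cost ℓ x P - ℓ x i) ^ 2 = varLoss ℓ x P := by
    simp only [varLoss, cost]
    calc ∑ i, P i * ((∑ j, ℓ x j * P j) - ℓ x i) ^ 2
        = ∑ i, ((∑ j, ℓ x j * P j) ^ 2 * P i - 2 * (∑ j, ℓ x j * P j) * (ℓ x i * P i)
            + ℓ x i ^ 2 * P i) := Finset.sum_congr rfl fun i _ => by ring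
      _ = ((∑ j, ℓ x j * P j) ^ 2 * ∑ i, P i - 2 * (∑ j, ℓ x j * P j) * ∑ i, ℓ x i * P i)
            + ∑ i, ℓ x i ^ 2 * P i := by
          rw [Finset.sum_add_distrib, Finset.sum_sub_distrib, ← Finset.mul_sum,
            ← Finset.mul_sum]
      _ = (∑ i, ℓ x i ^ 2 * P i) - (∑ i, ℓ x i * P i) ^ 2 := by rw [hPsum]; ring
  have hσ2nonneg : 0 ≤ varLoss ℓ x P := by
    rw [← hvar]
    exact Finset.sum_nonneg fun i _ => mul_nonneg (h0 i) (sq_nonneg _)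
  by_cases hσ0 : varLoss ℓ x P = 0
  · -- degenerate case : the loss is constant, the event never happens
    have hconst : ∀ i, ℓ x i = cost ℓ x P := by
      intro i
      have hzero : ∑ i, P i * (cost ℓ x P - ℓ x i) ^ 2 = 0 := by rw [hvar, hσ0]
      have hterm := (Finset.sum_eq_zero_iff_of_nonneg
        (fun i _ => mul_nonneg (h0 i) (sq_nonneg _))).mp hzero i (Finset.mem_univ i)
      have h2 := (mul_eq_zero.mp hterm).resolve_left (ne_of_gt (hPpos i))
      have h3 : cost ℓ x P - ℓ x i = 0 := sq_eq_zero_iff.mp h2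
      linarith
    filter_upwards [eventually_ge_atTop 1] with T hT1
    have hTpos : (0 : ℝ) < T := by exact_mod_cast hT1
    have hfalse : ∀ ω : Fin T → Fin d, ¬ (cost ℓ x P > cV a ℓ x (empDist ω) T) := by
      intro ω
      have hsum1 : ∑ i, empDist ω i = 1 := by
        have h1' := sum_comp_eq_fiber ω (fun _ => (1 : ℝ))
        simp only [one_mul] at h1'
        rw [Finset.sum_const, Finset.card_univ, Fintype.card_fin, nsmul_eq_mul,
          mul_one] at h1'
        simp only [empDist]
        rw [← Finset.sum_div, ← h1', div_self (ne_of_gt hTpos)]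
      have hcost : cost ℓ x (empDist ω) = cost ℓ x P := by
        have step1 : cost ℓ x (empDist ω) = ∑ i, ℓ x i * empDist ω i := rfl
        rw [step1]
        calc ∑ i, ℓ x i * empDist ω i = ∑ i, cost ℓ x P * empDist ω i :=
              Finset.sum_congr rfl fun i _ => by rw [hconst i]
          _ = cost ℓ x P * ∑ i, empDist ω i := (Finset.mul_sum _ _ _).symm
          _ = cost ℓ x P := by rw [hsum1, mul_one]
      simp only [cV, hcost, gt_iff_lt, not_lt]
      exact le_add_of_nonneg_right (Real.sqrt_nonneg _)
    have hzero : probT P T (fun ω => cost ℓ x P > cV a ℓ x (empDist ω) T) = 0 :=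
      Finset.sum_eq_zero fun ω _ => if_neg (hfalse ω)
    rw [hzero]
    exact (Real.exp_pos _).le
  -- main case
  have hσ2pos : 0 < varLoss ℓ x P := lt_of_le_of_ne hσ2nonneg (Ne.symm hσ0)
  have hd : 0 < d := by
    rcases Nat.eq_zero_or_pos d with h | h
    · exfalso; subst h; simp at hPsum
    · exact h
  have hdR : (0 : ℝ) < d := by exact_mod_cast hd
  obtain ⟨B, hBdef⟩ : ∃ B : ℝ, B = 1 + |cost ℓ x P| + ∑ i, |ℓ x i| := ⟨_, rfl⟩
  have hB1 : 1 ≤ B := by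
    have h1 : 0 ≤ |cost ℓ x P| := abs_nonneg _
    have h2 : 0 ≤ ∑ i, |ℓ x i| := Finset.sum_nonneg fun i _ => abs_nonneg _
    rw [hBdef]; linarith
  have hBpos : 0 < B := lt_of_lt_of_le one_pos hB1
  have hBf : ∀ i, |ℓ x i| ≤ B := by
    intro i
    have h1 : |ℓ x i| ≤ ∑ j, |ℓ x j| :=
      Finset.single_le_sum (f := fun j => |ℓ x j|) (fun j _ => abs_nonneg _)
        (Finset.mem_univ i)
    have h2 : 0 ≤ |cost ℓ x P| := abs_nonneg _
    rw [hBdef]; linarith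
  have hBμ : |cost ℓ x P| ≤ B := by
    have h2 : 0 ≤ ∑ i, |ℓ x i| := Finset.sum_nonneg fun i _ => abs_nonneg _
    rw [hBdef]; linarith
  obtain ⟨M, hMdef⟩ : ∃ m : ℝ, m = 2 * B := ⟨_, rfl⟩
  have hMpos : 0 < M := by rw [hMdef]; linarith
  have hgM : ∀ i, |cost ℓ x P - ℓ x i| ≤ M := by
    intro i
    calc |cost ℓ x P - ℓ x i| = |cost ℓ x P + -(ℓ x i)| := by rw [sub_eq_add_neg]
      _ ≤ |cost ℓ x P| + |(-(ℓ x i))| := abs_add_le _ _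
      _ = |cost ℓ x P| + |ℓ x i| := by rw [abs_neg]
      _ ≤ M := by rw [hMdef]; linarith [hBf i, hBμ]
  have hgmean : ∑ i, P i * (cost ℓ x P - ℓ x i) = 0 := by
    calc ∑ i, P i * (cost ℓ x P - ℓ x i)
        = ∑ i, (cost ℓ x P * P i - ℓ x i * P i) :=
          Finset.sum_congr rfl fun i _ => by ring
      _ = cost ℓ x P * ∑ i, P i - ∑ i, ℓ x i * P i := by
          rw [Finset.sum_sub_distrib, ← Finset.mul_sum]
      _ = 0 := by rw [hPsum, mul_one]; simp [cost]
  obtain ⟨v, hvdef⟩ : ∃ v : ℝ, v = varLoss ℓ x P * (1 - ε' / 4) := ⟨_, rfl⟩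
  have hvpos : 0 < v := by
    rw [hvdef]
    have h1 : 0 < 1 - ε' / 4 := by linarith
    exact mul_pos hσ2pos h1
  obtain ⟨δ, hδdef⟩ : ∃ δ : ℝ, δ = varLoss ℓ x P * ε' / (12 * B ^ 2 * d) := ⟨_, rfl⟩
  have hδpos : 0 < δ := by
    rw [hδdef]
    apply div_pos (mul_pos hσ2pos hε'pos)
    positivity
  obtain ⟨δ', hδ'def⟩ : ∃ e : ℝ, e = min δ 1 := ⟨_, rfl⟩
  have hδ'pos : 0 < δ' := by rw [hδ'def]; exact lt_min hδpos one_pos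
  have hδ'le1 : δ' ≤ 1 := by rw [hδ'def]; exact min_le_right _ _
  have hδ'leδ : δ' ≤ δ := by rw [hδ'def]; exact min_le_left _ _
  obtain ⟨lam0, hlam0def⟩ : ∃ l : ℝ, l = δ' / 2 := ⟨_, rfl⟩
  have hlam0pos : 0 < lam0 := by rw [hlam0def]; linarith
  have hlam0le : lam0 ≤ 1 / 2 := by rw [hlam0def]; linarith
  have hδ'lam0 : δ' = 2 * lam0 := by rw [hlam0def]; ring
  obtain ⟨c, hcdef⟩ : ∃ c : ℝ, c = lam0 ^ 2 := ⟨_, rfl⟩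
  have hcpos : 0 < c := by rw [hcdef]; positivity
  obtain ⟨r, hrdef⟩ : ∃ r : ℝ, r = (ε' * varLoss ℓ x P / (2 * M)) ^ 2 / (2 * v) :=
    ⟨_, rfl⟩
  have hrpos : 0 < r := by
    rw [hrdef]
    apply div_pos (pow_pos (by positivity) 2) (by linarith)
  -- eventual conditions
  have ev2 : ∀ᶠ T : ℕ in atTop, a T / T < r := ha_sub.eventually (gt_mem_nhds hrpos)
  have ev3 : ∀ᶠ T : ℕ in atTop, a T / T < c / 2 :=
    ha_sub.eventually (gt_mem_nhds (by linarith))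
  have ev4 : ∀ᶠ T : ℕ in atTop, 2 / ε' * Real.log 2 ≤ a T :=
    ha_top.eventually_ge_atTop _
  have ev5 : ∀ᶠ T : ℕ in atTop, (2 * d : ℝ) * Real.exp (-(c / 2)) ^ T < 1 / 2 := by
    have hlt1 : Real.exp (-(c / 2)) < 1 := by
      rw [Real.exp_lt_one_iff]; linarith
    have htend : Tendsto (fun T : ℕ => (2 * d : ℝ) * Real.exp (-(c / 2)) ^ T)
        atTop (nhds 0) := by
      have h := (tendsto_pow_atTop_nhds_zero_of_lt_one (Real.exp_nonneg _) hlt1).const_mul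
        ((2 * d : ℝ))
      simpa using h
    exact htend.eventually (gt_mem_nhds (by norm_num))
  filter_upwards [eventually_ge_atTop 1, ev2, ev3, ev4, ev5] with T hT1 hT2 hT3 hT4 hT5
  have hTpos : (0 : ℝ) < T := by exact_mod_cast hT1
  have hT0 : (T : ℝ) ≠ 0 := ne_of_gt hTpos
  have haT := ha_pos T
  obtain ⟨tT, htTdef⟩ : ∃ t : ℝ, t = Real.sqrt (2 * a T / T * v) := ⟨_, rfl⟩
  have htTnonneg : 0 ≤ tT := by rw [htTdef]; exact Real.sqrt_nonneg _
  have harg : 0 ≤ 2 * a T / T * v := by positivity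
  have htT2 : tT ^ 2 = 2 * a T / T * v := by rw [htTdef]; exact Real.sq_sqrt harg
  obtain ⟨lam, hlamdef⟩ : ∃ l : ℝ, l = tT / varLoss ℓ x P := ⟨_, rfl⟩
  have hlamnonneg : 0 ≤ lam := by
    rw [hlamdef]; exact div_nonneg htTnonneg hσ2pos.le
  have hlamM : lam * M ≤ ε' / 2 := by
    have htTle : tT ≤ ε' * varLoss ℓ x P / (2 * M) := by
      have h1 : 2 * a T / T * v ≤ 2 * r * v := by
        have h2 : a T / T ≤ r := hT2.le
        have h3 : 2 * a T / T = 2 * (a T / T) := by ring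
        rw [h3]
        exact mul_le_mul_of_nonneg_right (by linarith) hvpos.le
      have h2 : Real.sqrt (2 * r * v) = ε' * varLoss ℓ x P / (2 * M) := by
        rw [hrdef]
        have h3 : 2 * ((ε' * varLoss ℓ x P / (2 * M)) ^ 2 / (2 * v)) * v =
            (ε' * varLoss ℓ x P / (2 * M)) ^ 2 := by
          field_simp
        rw [h3]
        exact Real.sqrt_sq (by positivity)
      calc tT = Real.sqrt (2 * a T / T * v) := htTdef
        _ ≤ Real.sqrt (2 * r * v) := Real.sqrt_le_sqrt h1
        _ = ε' * varLoss ℓ x P / (2 * M) := h2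
    calc lam * M = tT / varLoss ℓ x P * M := by rw [hlamdef]
      _ ≤ (ε' * varLoss ℓ x P / (2 * M)) / varLoss ℓ x P * M := by gcongr
      _ = ε' / 2 := by field_simp
  have hlamM1 : lam * M ≤ 1 := le_trans hlamM (by linarith)
  -- event inclusion
  have hincl : ∀ ω : Fin T → Fin d, cost ℓ x P > cV a ℓ x (empDist ω) T →
      ((∃ i, δ' ≤ |empDist ω i - P i|) ∨
        ((T : ℝ) * tT ≤ ∑ t, (cost ℓ x P - ℓ x (ω t)))) := by
    intro ω hE
    by_cases hA : ∃ i, δ' ≤ |empDist ω i - P i|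
    · exact Or.inl hA
    right
    push_neg at hA
    have hcard : ∀ i, ((Finset.univ.filter (fun t => ω t = i)).card : ℝ) ≤ T := by
      intro i
      have h1 := Finset.card_filter_le Finset.univ (fun t => ω t = i)
      have h2 : (Finset.univ : Finset (Fin T)).card = T := by simp
      rw [h2] at h1
      exact_mod_cast h1
    have hPhat0 : ∀ i, 0 ≤ empDist ω i := by
      intro i; simp only [empDist]; exact div_nonneg (Nat.cast_nonneg _) (Nat.cast_nonneg _)
    have hPhat1 : ∀ i, empDist ω i ≤ 1 := by
      intro i; simp only [empDist]
      rw [div_le_one hTpos]; exact hcard i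
    have hμhatB : |cost ℓ x (empDist ω)| ≤ B := by
      have step1 : cost ℓ x (empDist ω) = ∑ i, ℓ x i * empDist ω i := rfl
      rw [step1]
      calc |∑ i, ℓ x i * empDist ω i| ≤ ∑ i, |ℓ x i * empDist ω i| :=
            Finset.abs_sum_le_sum_abs _ _
        _ ≤ ∑ i, |ℓ x i| := Finset.sum_le_sum fun i _ => by
            rw [abs_mul, abs_of_nonneg (hPhat0 i)]
            exact mul_le_of_le_one_right (abs_nonneg _) (hPhat1 i)
        _ ≤ B := by rw [hBdef]; linarith [abs_nonneg (cost ℓ x P)]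
    have hS0 : 0 ≤ ∑ i, |empDist ω i - P i| :=
      Finset.sum_nonneg fun i _ => abs_nonneg _
    have hS : ∑ i, |empDist ω i - P i| ≤ d * δ' := by
      calc ∑ i, |empDist ω i - P i| ≤ ∑ _i : Fin d, δ' :=
            Finset.sum_le_sum fun i _ => (hA i).le
        _ = d * δ' := by
            rw [Finset.sum_const, Finset.card_univ, Fintype.card_fin, nsmul_eq_mul]
    have hμdiff : |cost ℓ x (empDist ω) - cost ℓ x P| ≤ B * ∑ i, |empDist ω i - P i| := by
      have step1 : cost ℓ x (empDist ω) - cost ℓ x P =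
          ∑ i, ℓ x i * (empDist ω i - P i) := by
        have : cost ℓ x (empDist ω) - cost ℓ x P =
            ∑ i, ℓ x i * empDist ω i - ∑ i, ℓ x i * P i := rfl
        rw [this, ← Finset.sum_sub_distrib]
        exact Finset.sum_congr rfl fun i _ => by ring
      rw [step1]
      calc |∑ i, ℓ x i * (empDist ω i - P i)| ≤ ∑ i, |ℓ x i * (empDist ω i - P i)| :=
            Finset.abs_sum_le_sum_abs _ _
        _ ≤ ∑ i, B * |empDist ω i - P i| := Finset.sum_le_sum fun i _ => by
            rw [abs_mul]
            exact mul_le_mul_of_nonneg_right (hBf i) (abs_nonneg _)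
        _ = B * ∑ i, |empDist ω i - P i| := (Finset.mul_sum _ _ _).symm
    have hq : ∑ i, ℓ x i ^ 2 * P i - ∑ i, ℓ x i ^ 2 * empDist ω i ≤
        B ^ 2 * ∑ i, |empDist ω i - P i| := by
      have step1 : ∑ i, ℓ x i ^ 2 * P i - ∑ i, ℓ x i ^ 2 * empDist ω i =
          ∑ i, ℓ x i ^ 2 * (P i - empDist ω i) := by
        rw [← Finset.sum_sub_distrib]
        exact Finset.sum_congr rfl fun i _ => by ring
      rw [step1]
      calc ∑ i, ℓ x i ^ 2 * (P i - empDist ω i)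
          ≤ ∑ i, B ^ 2 * |empDist ω i - P i| := by
            refine Finset.sum_le_sum fun i _ => ?_
            have h1 : ℓ x i ^ 2 ≤ B ^ 2 := by
              have h1a := hBf i
              nlinarith only [h1a, sq_abs (ℓ x i), abs_nonneg (ℓ x i)]
            have h2 : P i - empDist ω i ≤ |empDist ω i - P i| := by
              rw [abs_sub_comm]; exact le_abs_self _
            calc ℓ x i ^ 2 * (P i - empDist ω i)
                ≤ ℓ x i ^ 2 * |empDist ω i - P i| :=
                  mul_le_mul_of_nonneg_left h2 (sq_nonneg _)
              _ ≤ B ^ 2 * |empDist ω i - P i| :=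
                  mul_le_mul_of_nonneg_right h1 (abs_nonneg _)
        _ = B ^ 2 * ∑ i, |empDist ω i - P i| := (Finset.mul_sum _ _ _).symm
    have hVhat : v ≤ varLoss ℓ x (empDist ω) := by
      have hexpand : varLoss ℓ x P - varLoss ℓ x (empDist ω) =
          (∑ i, ℓ x i ^ 2 * P i - ∑ i, ℓ x i ^ 2 * empDist ω i)
          + (cost ℓ x (empDist ω) - cost ℓ x P) *
              (cost ℓ x (empDist ω) + cost ℓ x P) := by
        simp only [varLoss]; ring
      have h2 : (cost ℓ x (empDist ω) - cost ℓ x P) *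
          (cost ℓ x (empDist ω) + cost ℓ x P) ≤
          (B * ∑ i, |empDist ω i - P i|) * (2 * B) := by
        calc (cost ℓ x (empDist ω) - cost ℓ x P) *
              (cost ℓ x (empDist ω) + cost ℓ x P)
            ≤ |(cost ℓ x (empDist ω) - cost ℓ x P) *
                (cost ℓ x (empDist ω) + cost ℓ x P)| := le_abs_self _
          _ = |cost ℓ x (empDist ω) - cost ℓ x P| *
                |cost ℓ x (empDist ω) + cost ℓ x P| := abs_mul _ _
          _ ≤ (B * ∑ i, |empDist ω i - P i|) * (2 * B) := by
              refine mul_le_mul hμdiff ?_ (abs_nonneg _) (by positivity)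
              calc |cost ℓ x (empDist ω) + cost ℓ x P|
                  ≤ |cost ℓ x (empDist ω)| + |cost ℓ x P| := abs_add_le _ _
                _ ≤ 2 * B := by linarith
      have hdiff : varLoss ℓ x P - varLoss ℓ x (empDist ω) ≤ 3 * B ^ 2 * (d * δ') := by
        rw [hexpand]
        have h5 : B ^ 2 * ∑ i, |empDist ω i - P i| ≤ B ^ 2 * (d * δ') :=
          mul_le_mul_of_nonneg_left hS (sq_nonneg B)
        have h6 : (B * ∑ i, |empDist ω i - P i|) * (2 * B) =
            2 * (B ^ 2 * ∑ i, |empDist ω i - P i|) := by ring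
        linarith only [hq, h2, h5, h6]
      have h3 : 3 * B ^ 2 * (d * δ') ≤ varLoss ℓ x P * ε' / 4 := by
        calc 3 * B ^ 2 * (d * δ') ≤ 3 * B ^ 2 * (d * δ) :=
              mul_le_mul_of_nonneg_left
                (mul_le_mul_of_nonneg_left hδ'leδ hdR.le) (by positivity)
          _ = varLoss ℓ x P * ε' / 4 := by rw [hδdef]; field_simp; ring
      rw [hvdef]
      linarith
    have hsqrt : tT ≤ Real.sqrt (2 * a T / T * varLoss ℓ x (empDist ω)) := by
      rw [htTdef]
      apply Real.sqrt_le_sqrt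
      have h4 : 0 ≤ 2 * a T / T := by positivity
      exact mul_le_mul_of_nonneg_left hVhat h4
    have hEc : cost ℓ x (empDist ω) + tT ≤ cost ℓ x P := by
      have hcv : cV a ℓ x (empDist ω) T = cost ℓ x (empDist ω) +
          Real.sqrt (2 * a T / T * varLoss ℓ x (empDist ω)) := rfl
      rw [hcv] at hE
      linarith
    have hemp : cost ℓ x (empDist ω) = (∑ t, ℓ x (ω t)) / T := by
      have step1 : cost ℓ x (empDist ω) = ∑ i, ℓ x i *
          (((Finset.univ.filter (fun t => ω t = i)).card : ℝ) / T) := rfl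
      rw [step1, sum_comp_eq_fiber ω (ℓ x), Finset.sum_div]
      exact Finset.sum_congr rfl fun i _ => by rw [mul_div_assoc]
    have h1 : ∑ t, (cost ℓ x P - ℓ x (ω t)) = T * cost ℓ x P - ∑ t, ℓ x (ω t) := by
      rw [Finset.sum_sub_distrib, Finset.sum_const, Finset.card_univ,
        Fintype.card_fin, nsmul_eq_mul]
    have h2 : ∑ t, ℓ x (ω t) = T * cost ℓ x (empDist ω) := by
      rw [hemp]; field_simp
    rw [h1, h2]
    linarith only [mul_le_mul_of_nonneg_left hEc hTpos.le]
  -- probability decomposition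
  have hstep1 : probT P T (fun ω => cost ℓ x P > cV a ℓ x (empDist ω) T) ≤
      probT P T (fun ω => ∃ i, δ' ≤ |empDist ω i - P i|) +
      probT P T (fun ω => (T : ℝ) * tT ≤ ∑ t, (cost ℓ x P - ℓ x (ω t))) :=
    le_trans (probT_mono h0 hincl) (probT_or_le h0)
  -- small events
  have hsmall : ∀ i : Fin d, probT P T (fun ω => δ' ≤ |empDist ω i - P i|) ≤
      2 * Real.exp (-(c * T)) := by
    intro i
    have hsum_plus : ∀ ω : Fin T → Fin d,
        ∑ t, ((if ω t = i then (1 : ℝ) else 0) - P i) = T * (empDist ω i - P i) := by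
      intro ω
      rw [Finset.sum_sub_distrib, Finset.sum_boole, Finset.sum_const, Finset.card_univ,
        Fintype.card_fin, nsmul_eq_mul]
      have : (T : ℝ) * empDist ω i =
          ((Finset.univ.filter (fun t => ω t = i)).card : ℝ) := by
        simp only [empDist]
        rw [mul_comm]; exact div_mul_cancel₀ _ hT0
      rw [mul_sub, this]
    have hmean_i : ∑ j, P j * ((if j = i then (1 : ℝ) else 0) - P i) = 0 := by
      have step1 : ∑ j, P j * ((if j = i then (1 : ℝ) else 0) - P i) =
          ∑ j, ((if j = i then P j else 0) - P j * P i) :=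
        Finset.sum_congr rfl fun j _ => by by_cases h : j = i <;> simp [h] <;> ring
      rw [step1, Finset.sum_sub_distrib, Finset.sum_ite_eq', ← Finset.sum_mul, hPsum]
      simp
    have habs1 : ∀ j, |(if j = i then (1 : ℝ) else 0) - P i| ≤ 1 := by
      intro j
      have hxle : (if j = i then (1 : ℝ) else 0) ≤ 1 := by split <;> norm_num
      have hx0 : (0 : ℝ) ≤ (if j = i then (1 : ℝ) else 0) := by split <;> norm_num
      rw [abs_le]
      constructor <;> linarith [hxle, hx0, hPle1 i, h0 i]
    have hvar_i : ∑ j, P j * ((if j = i then (1 : ℝ) else 0) - P i) ^ 2 ≤ 1 := by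
      calc ∑ j, P j * ((if j = i then (1 : ℝ) else 0) - P i) ^ 2
          ≤ ∑ j, P j * 1 := by
            refine Finset.sum_le_sum fun j _ => ?_
            refine mul_le_mul_of_nonneg_left ?_ (h0 j)
            have h1 := habs1 j
            nlinarith only [h1, sq_abs ((if j = i then (1 : ℝ) else 0) - P i),
              abs_nonneg ((if j = i then (1 : ℝ) else 0) - P i)]
        _ = 1 := by simp only [mul_one]; exact hPsum
    -- the minus version
    have hmean_i' : ∑ j, P j * (P i - (if j = i then (1 : ℝ) else 0)) = 0 := by
      have step1 : ∑ j, P j * (P i - (if j = i then (1 : ℝ) else 0)) =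
          ∑ j, -(P j * ((if j = i then (1 : ℝ) else 0) - P i)) :=
        Finset.sum_congr rfl fun j _ => by ring
      rw [step1, Finset.sum_neg_distrib, hmean_i, neg_zero]
    have habs1' : ∀ j, |P i - (if j = i then (1 : ℝ) else 0)| ≤ 1 := by
      intro j
      rw [abs_sub_comm]
      exact habs1 j
    have hvar_i' : ∑ j, P j * (P i - (if j = i then (1 : ℝ) else 0)) ^ 2 ≤ 1 := by
      have step1 : ∑ j, P j * (P i - (if j = i then (1 : ℝ) else 0)) ^ 2 =
          ∑ j, P j * ((if j = i then (1 : ℝ) else 0) - P i) ^ 2 :=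
        Finset.sum_congr rfl fun j _ => by ring
      rw [step1]; exact hvar_i
    -- exponent bound common
    have hKnn : (0 : ℝ) ≤ lam0 ^ 2 * (1 / 2 + 2 / 9 * (lam0 * 1)) := by
      have h1 : (0 : ℝ) ≤ 1 / 2 + 2 / 9 * (lam0 * 1) := by linarith only [hlam0pos]
      exact mul_nonneg (sq_nonneg _) h1
    have hexp_le : ∀ V : ℝ, V ≤ 1 →
        (T : ℝ) * (lam0 ^ 2 * (1 / 2 + 2 / 9 * (lam0 * 1)) * V - lam0 * δ') ≤
          -(c * T) := by
      intro V hV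
      have key : lam0 ^ 2 * (1 / 2 + 2 / 9 * (lam0 * 1)) * V - lam0 * δ' ≤ -c := by
        have h1 : lam0 ^ 2 * (1 / 2 + 2 / 9 * (lam0 * 1)) * V ≤
            lam0 ^ 2 * (1 / 2 + 2 / 9 * (lam0 * 1)) * 1 :=
          mul_le_mul_of_nonneg_left hV hKnn
        have h2 : lam0 ^ 2 * lam0 ≤ lam0 ^ 2 * (1 / 2) :=
          mul_le_mul_of_nonneg_left hlam0le (sq_nonneg _)
        rw [hδ'lam0, hcdef]
        linarith only [h1, h2, sq_nonneg lam0]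
      linarith only [mul_le_mul_of_nonneg_left key hTpos.le]
    have hplus : probT P T (fun ω => δ' ≤ empDist ω i - P i) ≤ Real.exp (-(c * T)) := by
      have hmono : ∀ ω : Fin T → Fin d, δ' ≤ empDist ω i - P i →
          (T : ℝ) * δ' ≤ ∑ t, ((if ω t = i then (1 : ℝ) else 0) - P i) := by
        intro ω h
        rw [hsum_plus ω]
        linarith only [mul_le_mul_of_nonneg_left h hTpos.le]
      calc probT P T (fun ω => δ' ≤ empDist ω i - P i)
          ≤ probT P T (fun ω => (T : ℝ) * δ' ≤
              ∑ t, ((if ω t = i then (1 : ℝ) else 0) - P i)) := probT_mono h0 hmono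
        _ ≤ Real.exp ((T : ℝ) * (lam0 ^ 2 * (1 / 2 + 2 / 9 * (lam0 * 1)) *
              (∑ j, P j * ((if j = i then (1 : ℝ) else 0) - P i) ^ 2) - lam0 * δ')) :=
            bernstein h0 hPsum (fun j => (if j = i then (1 : ℝ) else 0) - P i)
              hmean_i 1 lam0 habs1 hlam0pos.le (by linarith) δ'
        _ ≤ Real.exp (-(c * T)) := Real.exp_le_exp.mpr (hexp_le _ hvar_i)
    have hminus : probT P T (fun ω => δ' ≤ -(empDist ω i - P i)) ≤
        Real.exp (-(c * T)) := by
      have hmono : ∀ ω : Fin T → Fin d, δ' ≤ -(empDist ω i - P i) →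
          (T : ℝ) * δ' ≤ ∑ t, (P i - (if ω t = i then (1 : ℝ) else 0)) := by
        intro ω h
        have hs : ∑ t, (P i - (if ω t = i then (1 : ℝ) else 0)) =
            -(T * (empDist ω i - P i)) := by
          rw [← hsum_plus ω, ← Finset.sum_neg_distrib]
          exact Finset.sum_congr rfl fun t _ => by ring
        rw [hs]
        linarith only [mul_le_mul_of_nonneg_left h hTpos.le]
      calc probT P T (fun ω => δ' ≤ -(empDist ω i - P i))
          ≤ probT P T (fun ω => (T : ℝ) * δ' ≤
              ∑ t, (P i - (if ω t = i then (1 : ℝ) else 0))) := probT_mono h0 hmono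
        _ ≤ Real.exp ((T : ℝ) * (lam0 ^ 2 * (1 / 2 + 2 / 9 * (lam0 * 1)) *
              (∑ j, P j * (P i - (if j = i then (1 : ℝ) else 0)) ^ 2) - lam0 * δ')) :=
            bernstein h0 hPsum (fun j => P i - (if j = i then (1 : ℝ) else 0))
              hmean_i' 1 lam0 habs1' hlam0pos.le (by linarith) δ'
        _ ≤ Real.exp (-(c * T)) := Real.exp_le_exp.mpr (hexp_le _ hvar_i')
    calc probT P T (fun ω => δ' ≤ |empDist ω i - P i|)
        ≤ probT P T (fun ω => δ' ≤ empDist ω i - P i ∨ δ' ≤ -(empDist ω i - P i)) :=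
          probT_mono h0 fun ω h => le_abs.mp h
      _ ≤ probT P T (fun ω => δ' ≤ empDist ω i - P i) +
            probT P T (fun ω => δ' ≤ -(empDist ω i - P i)) := probT_or_le h0
      _ ≤ 2 * Real.exp (-(c * T)) := by linarith
  have hsum_small : probT P T (fun ω => ∃ i, δ' ≤ |empDist ω i - P i|) ≤
      2 * d * Real.exp (-(c * T)) := by
    calc probT P T (fun ω => ∃ i, δ' ≤ |empDist ω i - P i|)
        ≤ ∑ i, probT P T (fun ω => δ' ≤ |empDist ω i - P i|) := probT_exists_le h0 _
      _ ≤ ∑ _i : Fin d, 2 * Real.exp (-(c * T)) :=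
          Finset.sum_le_sum fun i _ => hsmall i
      _ = 2 * d * Real.exp (-(c * T)) := by
          rw [Finset.sum_const, Finset.card_univ, Fintype.card_fin, nsmul_eq_mul]
          ring
  -- main event
  have hmain : probT P T (fun ω => (T : ℝ) * tT ≤ ∑ t, (cost ℓ x P - ℓ x (ω t))) ≤
      Real.exp (-((1 - ε' / 2) * a T)) := by
    have hb := bernstein h0 hPsum (fun i => cost ℓ x P - ℓ x i) hgmean M lam hgM
      hlamnonneg hlamM1 tT (T := T)
    rw [hvar] at hb
    refine hb.trans (Real.exp_le_exp.mpr ?_)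
    have h1 : lam ^ 2 * varLoss ℓ x P = lam * tT := by
      rw [hlamdef]
      field_simp
    have h2 : (T : ℝ) * (lam * tT) = 2 * a T * (1 - ε' / 4) := by
      rw [hlamdef]
      have h3 : tT / varLoss ℓ x P * tT = tT ^ 2 / varLoss ℓ x P := by ring
      rw [h3, htT2, hvdef]
      field_simp
    have heq : (T : ℝ) * (lam ^ 2 * (1 / 2 + 2 / 9 * (lam * M)) * varLoss ℓ x P -
        lam * tT) = 2 * a T * (1 - ε' / 4) * ((1 / 2 + 2 / 9 * (lam * M)) - 1) := by
      linear_combination ((T : ℝ) * (1 / 2 + 2 / 9 * (lam * M))) * h1 +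
        ((1 / 2 + 2 / 9 * (lam * M)) - 1) * h2
    rw [heq]
    have hu0 : 0 ≤ lam * M := mul_nonneg hlamnonneg hMpos.le
    have k1 := mul_le_mul_of_nonneg_left hlamM haT.le
    have k2 := mul_nonneg (mul_nonneg haT.le hu0) hε'pos.le
    have k3 := mul_nonneg haT.le hε'pos.le
    nlinarith only [k1, k2, k3, haT, hε'pos, hε'le1, hu0]
  -- combine
  have hAbound : 2 * d * Real.exp (-(c * T)) ≤ 1 / 2 * Real.exp ((-1 + ε') * a T) := by
    have e1 : Real.exp (-(c * T)) =
        Real.exp (-(c / 2)) ^ T * Real.exp (-(c / 2 * T)) := by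
      rw [← Real.exp_nat_mul, ← Real.exp_add]
      congr 1
      ring
    have e2 : Real.exp (-(c / 2 * T)) ≤ Real.exp ((-1 + ε') * a T) := by
      apply Real.exp_le_exp.mpr
      have h1 : a T < c / 2 * T := (div_lt_iff₀ hTpos).mp hT3
      linarith only [h1, mul_nonneg hε'pos.le haT.le]
    calc 2 * d * Real.exp (-(c * T))
        = (2 * d * Real.exp (-(c / 2)) ^ T) * Real.exp (-(c / 2 * T)) := by
          rw [e1]; ring
      _ ≤ 1 / 2 * Real.exp ((-1 + ε') * a T) := by
          refine mul_le_mul hT5.le e2 (Real.exp_nonneg _) (by norm_num)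
  have hBbound : Real.exp (-((1 - ε' / 2) * a T)) ≤
      1 / 2 * Real.exp ((-1 + ε') * a T) := by
    have e1 : Real.exp (-((1 - ε' / 2) * a T)) =
        Real.exp ((-1 + ε') * a T) * Real.exp (-(ε' / 2 * a T)) := by
      rw [← Real.exp_add]
      congr 1
      ring
    have e2 : Real.exp (-(ε' / 2 * a T)) ≤ 1 / 2 := by
      have h1 : ε' / 2 * (2 / ε' * Real.log 2) = Real.log 2 := by
        field_simp
      have h2 : Real.log 2 ≤ ε' / 2 * a T := by
        have h3 := mul_le_mul_of_nonneg_left hT4 (by linarith : (0:ℝ) ≤ ε' / 2)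
        rw [h1] at h3
        exact h3
      calc Real.exp (-(ε' / 2 * a T)) ≤ Real.exp (-Real.log 2) :=
            Real.exp_le_exp.mpr (by linarith)
        _ = 1 / 2 := by rw [Real.exp_neg, Real.exp_log two_pos]; norm_num
    calc Real.exp (-((1 - ε' / 2) * a T))
        = Real.exp ((-1 + ε') * a T) * Real.exp (-(ε' / 2 * a T)) := e1
      _ ≤ Real.exp ((-1 + ε') * a T) * (1 / 2) :=
          mul_le_mul_of_nonneg_left e2 (Real.exp_nonneg _)
      _ = 1 / 2 * Real.exp ((-1 + ε') * a T) := by ring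
  calc probT P T (fun ω => cost ℓ x P > cV a ℓ x (empDist ω) T)
      ≤ probT P T (fun ω => ∃ i, δ' ≤ |empDist ω i - P i|) +
        probT P T (fun ω => (T : ℝ) * tT ≤ ∑ t, (cost ℓ x P - ℓ x (ω t))) := hstep1
    _ ≤ 2 * d * Real.exp (-(c * T)) + Real.exp (-((1 - ε' / 2) * a T)) :=
        add_le_add hsum_small hmain
    _ ≤ 1 / 2 * Real.exp ((-1 + ε') * a T) + 1 / 2 * Real.exp ((-1 + ε') * a T) :=
        add_le_add hAbound hBbound
    _ = Real.exp ((-1 + ε') * a T) := by ring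

/-- In the subexponential regime (`a_T → ∞`, `a_T/T → 0`), the SVP predictor
`ĉ_V` satisfies the out-of-sample guarantee. -/
theorem stmt_6 {X : Type*} [MetricSpace X] [CompactSpace X] {d : ℕ}
    (ℓ : X → Fin d → ℝ) (hℓ : ∀ i, Continuous fun x => ℓ x i)
    (a : ℕ → ℝ) (ha_pos : ∀ T, 0 < a T)
    (ha_top : Tendsto a atTop atTop)
    (ha_sub : Tendsto (fun T : ℕ => a T / (T : ℝ)) atTop (nhds 0)) :
    OOSGuarantee ℓ a (cV a ℓ) :=
  svp_oos_aux ℓ a ha_pos ha_top ha_sub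

end DDO
end
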